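/- arXiv:2605.07410 — 6 statements merged into one kernel-verified Lean document; each statement's English description precedes it below -/
import Mathlib

section
/- Let 𝔄 be a complex unital Banach algebra, let a, b ∈ 𝔄, and let S > 0. Write ad_a(x) := a·x − x·a and suppose that for every natural number n one has ‖ad_aⁿ(b)‖ ≤ n!·‖b‖·S^{−n}. Then for every s ∈ ℂ with |s| < S, ‖exp(s·a)·b·exp(−s·a)‖ ≤ ‖b‖ / (1 − |s|/S). -/
open NormedSpace ContinuousLinearMap

/-- Applying `exp` of an operator pointwise is the pointwise exponential series. -/
lemma exp_clm_apply {A : Type*} [NormedRing A] [NormedAlgebra ℂ A] [CompleteSpace A]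
    (M : A →L[ℂ] A) (x : A) :
    NormedSpace.exp M x = ∑' n : ℕ, ((n.factorial : ℂ))⁻¹ • ((M ^ n) x) := by
  have h := (ContinuousLinearMap.apply ℂ A x).map_tsum
    (NormedSpace.expSeries_summable' (𝕂 := ℂ) M)
  rw [NormedSpace.exp_eq_tsum (𝕂 := ℂ)]
  simpa using h

/-- Powers of a scalar multiple of an operator, applied pointwise. -/
lemma smul_pow_clm_apply {A : Type*} [NormedRing A] [NormedAlgebra ℂ A]
    (c : ℂ) (M : A →L[ℂ] A) (n : ℕ) (x : A) :
    ((c • M) ^ n) x = c ^ n • ((M ^ n) x) := by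
  induction n with
  | zero => simp
  | succ n ih =>
    simp only [pow_succ', ContinuousLinearMap.mul_apply, ContinuousLinearMap.smul_apply,
      ih, map_smul, smul_smul]
    rw [mul_comm (c ^ n) c]

/-- Hadamard-type bound: if the iterated commutators of `a` with `b` satisfy
`‖ad_aⁿ(b)‖ ≤ n!·‖b‖·S^{−n}`, then for `|s| < S`,
`‖exp(s·a)·b·exp(−s·a)‖ ≤ ‖b‖/(1 − |s|/S)`. -/
theorem stmt_4 {A : Type*} [NormedRing A] [NormedAlgebra ℂ A] [CompleteSpace A]
    (a b : A) (S : ℝ) (hS : 0 < S)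
    (had : ∀ n : ℕ, ‖(fun x => a * x - x * a)^[n] b‖ ≤ (n.factorial : ℝ) * ‖b‖ / S ^ n) :
    ∀ s : ℂ, ‖s‖ < S →
      ‖NormedSpace.exp (s • a) * b * NormedSpace.exp (-(s • a))‖ ≤
        ‖b‖ / (1 - ‖s‖ / S) := by
  intro s hs
  set L : A →L[ℂ] A := ContinuousLinearMap.mul ℂ A a with hLdef
  set R : A →L[ℂ] A := (ContinuousLinearMap.mul ℂ A).flip a with hRdef
  have hLapp : ∀ x : A, L x = a * x := fun x => rfl
  have hRapp : ∀ x : A, R x = x * a := fun x => rfl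
  -- iterated powers
  have hLpow : ∀ (n : ℕ) (x : A), (L ^ n) x = a ^ n * x := by
    intro n
    induction n with
    | zero => intro x; simp
    | succ n ih =>
      intro x
      rw [pow_succ', ContinuousLinearMap.mul_apply, hLapp, ih, pow_succ', mul_assoc]
  have hRpow : ∀ (n : ℕ) (x : A), (R ^ n) x = x * a ^ n := by
    intro n
    induction n with
    | zero => intro x; simp
    | succ n ih =>
      intro x
      rw [pow_succ', ContinuousLinearMap.mul_apply, hRapp, ih, pow_succ, mul_assoc]
  have hDpow : ∀ n : ℕ, ((L - R) ^ n) b = (fun x => a * x - x * a)^[n] b := by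
    intro n
    induction n with
    | zero => simp
    | succ n ih =>
      rw [pow_succ', ContinuousLinearMap.mul_apply, ih, Function.iterate_succ_apply']
      simp [hLapp, hRapp]
  -- commuting operators
  have hcomm : Commute (s • L) (-(s • R)) := by
    show (s • L) * (-(s • R)) = (-(s • R)) * (s • L)
    ext x
    simp only [ContinuousLinearMap.mul_apply, ContinuousLinearMap.neg_apply,
      ContinuousLinearMap.smul_apply, map_neg, map_smul, hLapp, hRapp]
    simp [mul_assoc, mul_smul_comm, smul_mul_assoc]
  -- right factor
  have h1 : NormedSpace.exp (-(s • R)) b = b * NormedSpace.exp (-(s • a)) := by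
    have hsum : Summable fun n : ℕ => ((n.factorial : ℂ))⁻¹ • (-(s • a)) ^ n :=
      NormedSpace.expSeries_summable' (𝕂 := ℂ) _
    rw [exp_clm_apply]
    simp only [NormedSpace.exp_eq_tsum (𝕂 := ℂ)]
    rw [← hsum.tsum_mul_left b]
    refine tsum_congr fun n => ?_
    have hnegR : -(s • R) = (-s) • R := by ext y; simp
    have hnega : -(s • a) = (-s) • a := by rw [neg_smul]
    rw [hnegR, hnega, smul_pow_clm_apply, hRpow, smul_pow]
    simp [mul_smul_comm, smul_smul]
  -- left factor
  have h2 : ∀ x : A, NormedSpace.exp (s • L) x = NormedSpace.exp (s • a) * x := by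
    intro x
    have hsum : Summable fun n : ℕ => ((n.factorial : ℂ))⁻¹ • (s • a) ^ n :=
      NormedSpace.expSeries_summable' (𝕂 := ℂ) _
    rw [exp_clm_apply]
    simp only [NormedSpace.exp_eq_tsum (𝕂 := ℂ)]
    rw [← hsum.tsum_mul_right x]
    refine tsum_congr fun n => ?_
    rw [smul_pow_clm_apply, hLpow, smul_pow]
    simp [smul_mul_assoc, smul_smul, mul_comm]
  -- the key series identity
  have key : NormedSpace.exp (s • a) * b * NormedSpace.exp (-(s • a)) =
      ∑' n : ℕ, (((n.factorial : ℂ))⁻¹ * s ^ n) • (fun x => a * x - x * a)^[n] b := by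
    letI : NormedAlgebra ℚ (A →L[ℂ] A) := NormedAlgebra.restrictScalars ℚ ℂ (A →L[ℂ] A)
    rw [mul_assoc, ← h1, ← h2, ← ContinuousLinearMap.mul_apply,
      ← NormedSpace.exp_add_of_commute hcomm]
    have hT : s • L + -(s • R) = s • (L - R) := by rw [smul_sub]; abel
    rw [hT, exp_clm_apply]
    refine tsum_congr fun n => ?_
    rw [smul_pow_clm_apply, hDpow, smul_smul]
  rw [key]
  -- norm estimates
  set r : ℝ := ‖s‖ / S with hrdef
  have hr0 : 0 ≤ r := div_nonneg (norm_nonneg s) hS.le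
  have hr1 : r < 1 := (div_lt_one hS).mpr hs
  have hterm : ∀ n : ℕ,
      ‖(((n.factorial : ℂ))⁻¹ * s ^ n) • (fun x => a * x - x * a)^[n] b‖ ≤ r ^ n * ‖b‖ := by
    intro n
    rw [norm_smul]
    have hc : ‖((n.factorial : ℂ))⁻¹ * s ^ n‖ = ((n.factorial : ℝ))⁻¹ * ‖s‖ ^ n := by
      simp [norm_mul, norm_inv, norm_pow, Complex.norm_natCast]
    rw [hc]
    have hfac : (0:ℝ) < (n.factorial : ℝ) := by positivity
    calc ((n.factorial : ℝ))⁻¹ * ‖s‖ ^ n * ‖(fun x => a * x - x * a)^[n] b‖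
        ≤ ((n.factorial : ℝ))⁻¹ * ‖s‖ ^ n * ((n.factorial : ℝ) * ‖b‖ / S ^ n) := by
          refine mul_le_mul_of_nonneg_left (had n) ?_
          positivity
      _ = r ^ n * ‖b‖ := by
          rw [hrdef, div_pow]
          field_simp
  have hgeom : Summable fun n : ℕ => r ^ n * ‖b‖ :=
    (summable_geometric_of_lt_one hr0 hr1).mul_right _
  have hsum : Summable fun n : ℕ =>
      ‖(((n.factorial : ℂ))⁻¹ * s ^ n) • (fun x => a * x - x * a)^[n] b‖ :=
    Summable.of_nonneg_of_le (fun n => norm_nonneg _) hterm hgeom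
  calc ‖∑' n : ℕ, (((n.factorial : ℂ))⁻¹ * s ^ n) • (fun x => a * x - x * a)^[n] b‖
      ≤ ∑' n : ℕ, ‖(((n.factorial : ℂ))⁻¹ * s ^ n) • (fun x => a * x - x * a)^[n] b‖ :=
        norm_tsum_le_tsum_norm hsum
    _ ≤ ∑' n : ℕ, r ^ n * ‖b‖ := Summable.tsum_le_tsum hterm hsum hgeom
    _ = (1 - r)⁻¹ * ‖b‖ := by rw [tsum_mul_right, tsum_geometric_of_lt_one hr0 hr1]
    _ = ‖b‖ / (1 - r) := by rw [div_eq_inv_mul]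
end

section
/- Let V be a finite-dimensional complex inner product space, let H' and B be self-adjoint linear endomorphisms of V, set H := H' + B, and let λ > 0. Assume the real Hadamard bound: for every u ∈ [0, λ], ‖e^{uH}·B·e^{−uH}‖ ≤ 2‖B‖. Then for every linear endomorphism A of V and all M, N ∈ ℝ, ‖E^H([M,∞))·A·E^H((−∞,N])‖ ≤ exp(−λ(M − N − 4‖B‖))·‖e^{λH'}·A·e^{−λH'}‖. -/
/-- The spectral projection `E^T(I)` of an endomorphism `T` of a finite-dimensional
complex inner product space: the orthogonal projection onto the span of all
eigenvectors of `T` whose eigenvalue lies in `I ⊆ ℝ`. -/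
noncomputable def specProj {V : Type*} [NormedAddCommGroup V] [InnerProductSpace ℂ V]
    [FiniteDimensional ℂ V] (T : V →L[ℂ] V) (I : Set ℝ) : V →L[ℂ] V :=
  (⨆ μ ∈ I, Module.End.eigenspace (↑T : V →ₗ[ℂ] V) (μ : ℂ)).subtypeL.comp
    (Submodule.orthogonalProjectionOnto (⨆ μ ∈ I, Module.End.eigenspace (↑T : V →ₗ[ℂ] V) (μ : ℂ)))

open NormedSpace in
/-- `exp` applied to an eigenvector. -/
lemma expCLM_apply_eigenvector {V : Type*} [NormedAddCommGroup V] [InnerProductSpace ℂ V]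
    [FiniteDimensional ℂ V] {T : V →L[ℂ] V} {μ : ℂ} {v : V} (h : T v = μ • v) :
    exp T v = Complex.exp μ • v := by
  have hpow : ∀ k : ℕ, (T ^ k) v = μ ^ k • v := by
    intro k
    induction k with
    | zero => simp
    | succ k ih =>
      rw [pow_succ, ContinuousLinearMap.mul_apply, h, map_smul, ih, smul_smul, pow_succ,
        mul_comm]
  have hsum : Summable (fun k : ℕ => ((k.factorial : ℂ))⁻¹ • T ^ k) := expSeries_summable' T
  have happ : exp T v = ∑' k : ℕ, (((k.factorial : ℂ))⁻¹ • T ^ k) v := by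
    rw [exp_eq_tsum (𝕂 := ℂ)]
    exact ((ContinuousLinearMap.apply ℂ V v).map_tsum hsum)
  have hterm : ∀ k : ℕ, (((k.factorial : ℂ))⁻¹ • T ^ k) v
      = (((k.factorial : ℂ))⁻¹ * μ ^ k) • v := by
    intro k
    rw [ContinuousLinearMap.smul_apply, hpow, smul_smul]
  rw [happ]
  simp_rw [hterm]
  have hsum2 : Summable (fun k : ℕ => ((k.factorial : ℂ))⁻¹ * μ ^ k) := by
    simpa [smul_eq_mul] using expSeries_summable' (𝕂 := ℂ) μ
  rw [hsum2.tsum_smul_const]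
  congr 1
  rw [Complex.exp_eq_exp_ℂ, exp_eq_tsum (𝕂 := ℂ)]
  simp [smul_eq_mul]

/-- Norm of a sum of orthonormal vectors with coefficients. -/
lemma orthonormal_norm_sq_sum {V : Type*} [NormedAddCommGroup V] [InnerProductSpace ℂ V]
    {n : ℕ} {v : Fin n → V} (hv : Orthonormal ℂ v) (a : Fin n → ℂ) :
    ‖∑ i, a i • v i‖ ^ 2 = ∑ i, ‖a i‖ ^ 2 := by
  rw [norm_sq_eq_re_inner (𝕜 := ℂ), hv.inner_sum]
  simp [RCLike.conj_mul]
  norm_cast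

/-- An operator diagonal in an orthonormal basis has norm bounded by the sup of the
diagonal entries. -/
lemma diag_opNorm_le {V : Type*} [NormedAddCommGroup V] [InnerProductSpace ℂ V]
    [FiniteDimensional ℂ V] {n : ℕ} (b : OrthonormalBasis (Fin n) ℂ V)
    (F : V →L[ℂ] V) (d : Fin n → ℂ) (hF : ∀ i, F (b i) = d i • b i)
    {c : ℝ} (hc : 0 ≤ c) (hd : ∀ i, ‖d i‖ ≤ c) : ‖F‖ ≤ c := by
  refine F.opNorm_le_bound hc fun x => ?_
  have hFx : F x = ∑ i, (d i * b.repr x i) • b i := by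
    conv_lhs => rw [← b.sum_repr x]
    rw [map_sum]
    refine Finset.sum_congr rfl fun i _ => ?_
    rw [map_smul, hF i, smul_smul, mul_comm]
  have h1 : ‖F x‖ ^ 2 = ∑ i, ‖d i * b.repr x i‖ ^ 2 := by
    rw [hFx, orthonormal_norm_sq_sum b.orthonormal]
  have h2 : ‖x‖ ^ 2 = ∑ i, ‖b.repr x i‖ ^ 2 := by
    conv_lhs => rw [← b.sum_repr x]
    rw [orthonormal_norm_sq_sum b.orthonormal]
  have hle : ‖F x‖ ^ 2 ≤ (c * ‖x‖) ^ 2 := by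
    rw [h1, mul_pow, h2, Finset.mul_sum]
    refine Finset.sum_le_sum fun i _ => ?_
    rw [norm_mul, mul_pow]
    have h0 : (0:ℝ) ≤ ‖b.repr x i‖ ^ 2 := sq_nonneg _
    have h1 : ‖d i‖ ^ 2 ≤ c ^ 2 := pow_le_pow_left₀ (norm_nonneg _) (hd i) 2
    exact mul_le_mul_of_nonneg_right h1 h0
  have h3 : (0:ℝ) ≤ c * ‖x‖ := mul_nonneg hc (norm_nonneg x)
  nlinarith [norm_nonneg (F x)]

open NormedSpace in
lemma real_smul_eq_complex_smul {V : Type*} [NormedAddCommGroup V] [InnerProductSpace ℂ V]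
    (u : ℝ) (T : V →L[ℂ] V) : (u : ℂ) • T = u • T := by
  rw [← algebraMap_smul ℂ u T, Complex.coe_algebraMap]

open NormedSpace in
lemma hasDerivAt_exp_mul_exp {V : Type*} [NormedAddCommGroup V] [InnerProductSpace ℂ V]
    [FiniteDimensional ℂ V] (P Q : V →L[ℂ] V) (u : ℝ) :
    HasDerivAt (fun t : ℝ => exp (t • P) * exp (-(t • Q)))
      (exp (u • P) * (P - Q) * exp (-(u • Q))) u := by
  have hrw : (exp : (V →L[ℂ] V) → V →L[ℂ] V) = exp := rfl
  have h1 : HasDerivAt (fun t : ℝ => exp (t • P)) (exp (u • P) * P) u := by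
    rw [← hrw]
    exact hasDerivAt_exp_smul_const P u
  have h2 : HasDerivAt (fun t : ℝ => exp (-(t • Q))) (exp (-(u • Q)) * (-Q)) u := by
    rw [← hrw]
    have h := hasDerivAt_exp_smul_const (-Q) u
    have heq : ∀ t : ℝ, t • (-Q) = -(t • Q) := fun t => smul_neg t Q
    simp only [heq] at h
    exact h
  have hprod := h1.mul h2
  refine hprod.congr_deriv ?_
  have hcomm : exp (-(u • Q)) * (-Q) = (-Q) * exp (-(u • Q)) := by
    have hc : Commute (-(u • Q)) (-Q) :=
      (((Commute.refl Q).smul_left u).neg_left).neg_right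
    exact hc.exp_left.eq
  rw [hcomm]
  noncomm_ring

open NormedSpace in
/-- The Grönwall step: if the "interaction" term is bounded relative to the pair product,
then the pair product is exponentially bounded. -/
lemma norm_exp_mul_exp_le {V : Type*} [NormedAddCommGroup V] [InnerProductSpace ℂ V]
    [FiniteDimensional ℂ V] (P Q : V →L[ℂ] V) (lam K : ℝ) (hlam : 0 ≤ lam)
    (hbound : ∀ u ∈ Set.Ico (0:ℝ) lam,
      ‖exp (u • P) * (P - Q) * exp (-(u • Q))‖
        ≤ K * ‖exp (u • P) * exp (-(u • Q))‖) :
    ‖exp (lam • P) * exp (-(lam • Q))‖ ≤ Real.exp (K * lam) := by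
  set f : ℝ → (V →L[ℂ] V) := fun t => exp (t • P) * exp (-(t • Q)) with hf
  have hderiv : ∀ u : ℝ, HasDerivAt f (exp (u • P) * (P - Q) * exp (-(u • Q))) u :=
    fun u => hasDerivAt_exp_mul_exp P Q u
  have hcont : ContinuousOn f (Set.Icc 0 lam) :=
    fun u _ => ((hderiv u).continuousAt).continuousWithinAt
  have h0 : ‖f 0‖ ≤ 1 := by
    have : f 0 = 1 := by simp [hf, exp_zero]
    rw [this, ContinuousLinearMap.one_def]
    exact ContinuousLinearMap.norm_id_le
  have key := norm_le_gronwallBound_of_norm_deriv_right_le hcont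
    (fun u _ => (hderiv u).hasDerivWithinAt) h0
    (fun u hu => (hbound u hu).trans_eq (add_zero _).symm)
    lam (Set.right_mem_Icc.mpr hlam)
  calc ‖f lam‖ ≤ gronwallBound 1 K 0 (lam - 0) := key
    _ = Real.exp (K * lam) := by rw [gronwallBound_ε0, sub_zero, one_mul]

open NormedSpace in
open scoped Classical in
/-- The spectral projection applied to the eigenvector basis is `1` or `0` according to
whether the eigenvalue lies in `I`. -/
lemma specProj_apply_eigenvectorBasis {V : Type*} [NormedAddCommGroup V]
    [InnerProductSpace ℂ V] [FiniteDimensional ℂ V] {T : V →L[ℂ] V}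
    (hsym : (↑T : V →ₗ[ℂ] V).IsSymmetric) {n : ℕ} (hn : Module.finrank ℂ V = n)
    (I : Set ℝ) (i : Fin n) :
    specProj T I (hsym.eigenvectorBasis hn i)
      = if hsym.eigenvalues hn i ∈ I then hsym.eigenvectorBasis hn i else 0 := by
  set x := hsym.eigenvectorBasis hn i with hx
  set S := ⨆ μ ∈ I, Module.End.eigenspace (↑T : V →ₗ[ℂ] V) (μ : ℂ) with hS
  have hxmem : x ∈ Module.End.eigenspace (↑T : V →ₗ[ℂ] V) ((hsym.eigenvalues hn i : ℝ) : ℂ) :=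
    (hsym.hasEigenvector_eigenvectorBasis hn i).1
  by_cases hmem : hsym.eigenvalues hn i ∈ I
  · rw [if_pos hmem]
    have hxS : x ∈ S := by
      refine le_iSup₂ (f := fun (μ : ℝ) (_ : μ ∈ I) =>
        Module.End.eigenspace (↑T : V →ₗ[ℂ] V) (μ : ℂ)) (hsym.eigenvalues hn i) hmem hxmem
    show ((S.orthogonalProjectionOnto x : S) : V) = x
    exact (Submodule.starProjection_eq_self_iff (K := S)).mpr hxS
  · rw [if_neg hmem]
    have hxSperp : x ∈ Sᗮ := by
      have hle : S ≤ (ℂ ∙ x)ᗮ := by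
        refine iSup₂_le fun μ' hμ' => fun w hw => ?_
        rw [Submodule.mem_orthogonal_singleton_iff_inner_right]
        have hne : ((hsym.eigenvalues hn i : ℝ) : ℂ) ≠ ((μ' : ℝ) : ℂ) := by
          intro hc
          exact hmem (by rwa [Complex.ofReal_inj.mp hc])
        exact hsym.orthogonalFamily_eigenspaces hne ⟨x, hxmem⟩ ⟨w, hw⟩
      have h1 : (ℂ ∙ x)ᗮᗮ ≤ Sᗮ := Submodule.orthogonal_le hle
      exact h1 (Submodule.le_orthogonal_orthogonal _ (Submodule.mem_span_singleton_self x))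
    show ((S.orthogonalProjectionOnto x : S) : V) = 0
    rw [Submodule.orthogonalProjectionOnto_apply_of_mem_orthogonal hxSperp]
    rfl

set_option maxHeartbeats 1000000 in
/-- Off-diagonal estimate (finite volume, AKL Thm 2.1/5.1 form): under the real
Hadamard bound for `e^{uH} B e^{−uH}` on `[0,λ]`, with `H = H' + B`,
`‖E^H([M,∞))·A·E^H((−∞,N])‖ ≤ e^{−λ(M−N−4‖B‖)}·‖e^{λH'} A e^{−λH'}‖`. -/
theorem stmt_5 {V : Type*} [NormedAddCommGroup V] [InnerProductSpace ℂ V]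
    [FiniteDimensional ℂ V]
    (H' B : V →L[ℂ] V) (hH' : IsSelfAdjoint H') (hB : IsSelfAdjoint B)
    (lam : ℝ) (hlam : 0 < lam)
    (hHad : ∀ u ∈ Set.Icc (0 : ℝ) lam,
      ‖NormedSpace.exp ((u : ℂ) • (H' + B)) * B *
          NormedSpace.exp (-((u : ℂ) • (H' + B)))‖ ≤ 2 * ‖B‖) :
    ∀ (A : V →L[ℂ] V) (M N : ℝ),
      ‖specProj (H' + B) (Set.Ici M) * A * specProj (H' + B) (Set.Iic N)‖ ≤
        Real.exp (-lam * (M - N - 4 * ‖B‖)) *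
          ‖NormedSpace.exp ((lam : ℂ) • H') * A *
              NormedSpace.exp (-((lam : ℂ) • H'))‖ := by
  classical
  intro A M N
  simp only [real_smul_eq_complex_smul] at hHad ⊢
  set H := H' + B with hHdef
  have hH : IsSelfAdjoint H := hH'.add hB
  have hsym : (↑H : V →ₗ[ℂ] V).IsSymmetric :=
    ContinuousLinearMap.isSelfAdjoint_iff_isSymmetric.mp hH
  have hn : Module.finrank ℂ V = Module.finrank ℂ V := rfl
  set b := hsym.eigenvectorBasis hn with hb
  set μ := hsym.eigenvalues hn with hμdef
  have heig : ∀ i, H (b i) = (μ i : ℂ) • b i := fun i =>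
    (hsym.hasEigenvector_eigenvectorBasis hn i).apply_eq_smul
  have hexp : ∀ (c : ℂ) (i), NormedSpace.exp (c • H) (b i) = Complex.exp (c * μ i) • b i := by
    intro c i
    refine expCLM_apply_eigenvector ?_
    rw [ContinuousLinearMap.smul_apply, heig i, smul_smul]
  -- inverse relations for exponentials
  have hinv : ∀ x : V →L[ℂ] V,
      NormedSpace.exp x * NormedSpace.exp (-x) = 1 := fun x => by
    let +nondep : NormedAlgebra ℚ (V →L[ℂ] V) := .restrictScalars ℚ ℂ _
    rw [← NormedSpace.exp_add_of_commute ((Commute.refl x).neg_right), add_neg_cancel,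
      NormedSpace.exp_zero]
  have hinv' : ∀ x : V →L[ℂ] V,
      NormedSpace.exp (-x) * NormedSpace.exp x = 1 := fun x => by
    let +nondep : NormedAlgebra ℚ (V →L[ℂ] V) := .restrictScalars ℚ ℂ _
    rw [← NormedSpace.exp_add_of_commute ((Commute.refl x).neg_left), neg_add_cancel,
      NormedSpace.exp_zero]
  -- Hadamard bound in real-smul form
  have hHad' : ∀ u ∈ Set.Icc (0:ℝ) lam,
      ‖NormedSpace.exp (u • H) * B * NormedSpace.exp (-(u • H))‖ ≤ 2 * ‖B‖ :=
    fun u hu => hHad u hu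
  -- Gronwall bounds
  have hG1 : ‖NormedSpace.exp (lam • H) * NormedSpace.exp (-(lam • H'))‖
      ≤ Real.exp (2 * ‖B‖ * lam) := by
    refine norm_exp_mul_exp_le H H' lam (2 * ‖B‖) hlam.le fun u hu => ?_
    have hHB : H - H' = B := by rw [hHdef]; abel
    rw [hHB]
    have hfac : NormedSpace.exp (u • H) * B * NormedSpace.exp (-(u • H'))
        = (NormedSpace.exp (u • H) * B * NormedSpace.exp (-(u • H)))
          * (NormedSpace.exp (u • H) * NormedSpace.exp (-(u • H'))) := by
      simp only [mul_assoc]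
      rw [← mul_assoc (NormedSpace.exp (-(u • H))), hinv' (u • H), one_mul]
    rw [hfac]
    refine (norm_mul_le _ _).trans ?_
    exact mul_le_mul_of_nonneg_right (hHad' u ⟨hu.1, hu.2.le⟩) (norm_nonneg _)
  have hG2 : ‖NormedSpace.exp (lam • H') * NormedSpace.exp (-(lam • H))‖
      ≤ Real.exp (2 * ‖B‖ * lam) := by
    refine norm_exp_mul_exp_le H' H lam (2 * ‖B‖) hlam.le fun u hu => ?_
    have hHB : H' - H = -B := by rw [hHdef]; abel
    rw [hHB]
    have hfac : NormedSpace.exp (u • H') * (-B) * NormedSpace.exp (-(u • H))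
        = (NormedSpace.exp (u • H') * NormedSpace.exp (-(u • H)))
          * (NormedSpace.exp (u • H) * (-B) * NormedSpace.exp (-(u • H))) := by
      simp only [mul_assoc]
      rw [← mul_assoc (NormedSpace.exp (-(u • H))), hinv' (u • H), one_mul]
    rw [hfac]
    refine (norm_mul_le _ _).trans ?_
    rw [mul_comm (2 * ‖B‖)]
    refine mul_le_mul_of_nonneg_left ?_ (norm_nonneg _)
    have : NormedSpace.exp (u • H) * (-B) * NormedSpace.exp (-(u • H))
        = -(NormedSpace.exp (u • H) * B * NormedSpace.exp (-(u • H))) := by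
      rw [mul_neg, neg_mul]
    rw [this, norm_neg]
    exact hHad' u ⟨hu.1, hu.2.le⟩
  -- diagonal bounds for projections composed with exponentials
  set eH : V →L[ℂ] V := NormedSpace.exp (lam • H) with heH
  set eHm : V →L[ℂ] V := NormedSpace.exp (-(lam • H)) with heHm
  set eH' : V →L[ℂ] V := NormedSpace.exp (lam • H') with heH'
  set eH'm : V →L[ℂ] V := NormedSpace.exp (-(lam • H')) with heH'm
  set P : V →L[ℂ] V := specProj H (Set.Ici M) with hPdef
  set Q : V →L[ℂ] V := specProj H (Set.Iic N) with hQdef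
  have hnegH : -(lam • H) = (-(lam : ℂ)) • H := by
    rw [← real_smul_eq_complex_smul, neg_smul]
  have hnegH' : -(lam • H') = (-(lam : ℂ)) • H' := by
    rw [← real_smul_eq_complex_smul, neg_smul]
  have heH_apply : ∀ i, eH (b i) = Complex.exp ((lam * μ i : ℝ) : ℂ) • b i := by
    intro i
    rw [heH, ← real_smul_eq_complex_smul, hexp]
    congr 1
    push_cast
    ring
  have heHm_apply : ∀ i, eHm (b i) = Complex.exp ((-(lam * μ i) : ℝ) : ℂ) • b i := by
    intro i
    rw [heHm, hnegH, hexp]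
    congr 1
    push_cast
    ring
  have hPb : ∀ i, P (b i) = if μ i ∈ Set.Ici M then b i else 0 := fun i =>
    specProj_apply_eigenvectorBasis hsym hn (Set.Ici M) i
  have hQb : ∀ i, Q (b i) = if μ i ∈ Set.Iic N then b i else 0 := fun i =>
    specProj_apply_eigenvectorBasis hsym hn (Set.Iic N) i
  have hnormexp : ∀ r : ℝ, ‖Complex.exp ((r : ℝ) : ℂ)‖ = Real.exp r := by
    intro r
    rw [Complex.norm_exp]
    simp
  -- bound for P * eHm
  have n1 : ‖P * eHm‖ ≤ Real.exp (-(lam * M)) := by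
    refine diag_opNorm_le b (P * eHm)
      (fun i => if μ i ∈ Set.Ici M then Complex.exp ((-(lam * μ i) : ℝ) : ℂ) else 0)
      (fun i => ?_) (Real.exp_pos _).le (fun i => ?_)
    · beta_reduce
      rw [ContinuousLinearMap.mul_apply, heHm_apply, map_smul, hPb]
      split_ifs with h
      · rfl
      · simp
    · beta_reduce
      split_ifs with h
      · rw [hnormexp]
        refine Real.exp_le_exp.mpr ?_
        have h2 : M ≤ μ i := h
        exact neg_le_neg (mul_le_mul_of_nonneg_left h2 hlam.le)
      · rw [norm_zero]
        exact (Real.exp_pos _).le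
  -- bound for eH * Q
  have n4 : ‖eH * Q‖ ≤ Real.exp (lam * N) := by
    refine diag_opNorm_le b (eH * Q)
      (fun i => if μ i ∈ Set.Iic N then Complex.exp ((lam * μ i : ℝ) : ℂ) else 0)
      (fun i => ?_) (Real.exp_pos _).le (fun i => ?_)
    · beta_reduce
      rw [ContinuousLinearMap.mul_apply, hQb]
      split_ifs with h
      · rw [heH_apply]
      · simp
    · beta_reduce
      split_ifs with h
      · rw [hnormexp]
        refine Real.exp_le_exp.mpr ?_
        have h2 : μ i ≤ N := h
        exact mul_le_mul_of_nonneg_left h2 hlam.le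
      · rw [norm_zero]
        exact (Real.exp_pos _).le
  -- key algebraic identity
  have c1 : eHm * eH = 1 := hinv' (lam • H)
  have c2 : eH'm * eH' = 1 := hinv' (lam • H')
  have e1 : ∀ X : V →L[ℂ] V, eHm * (eH * X) = X := fun X => by
    rw [← mul_assoc, c1, one_mul]
  have e2 : ∀ X : V →L[ℂ] V, eH'm * (eH' * X) = X := fun X => by
    rw [← mul_assoc, c2, one_mul]
  have key : P * A * Q
      = (P * eHm) * (eH * eH'm) * (eH' * A * eH'm) * (eH' * eHm) * (eH * Q) := by
    simp only [mul_assoc]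
    rw [e1, e2, e2, e1]
  rw [key]
  calc ‖(P * eHm) * (eH * eH'm) * (eH' * A * eH'm) * (eH' * eHm) * (eH * Q)‖
      ≤ ‖P * eHm‖ * ‖eH * eH'm‖ * ‖eH' * A * eH'm‖ * ‖eH' * eHm‖ * ‖eH * Q‖ := by
        refine (norm_mul_le _ _).trans ?_
        refine mul_le_mul_of_nonneg_right ?_ (norm_nonneg _)
        refine (norm_mul_le _ _).trans ?_
        refine mul_le_mul_of_nonneg_right ?_ (norm_nonneg _)
        refine (norm_mul_le _ _).trans ?_
        refine mul_le_mul_of_nonneg_right ?_ (norm_nonneg _)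
        exact norm_mul_le _ _
    _ ≤ Real.exp (-(lam * M)) * Real.exp (2 * ‖B‖ * lam) * ‖eH' * A * eH'm‖
          * Real.exp (2 * ‖B‖ * lam) * Real.exp (lam * N) := by
        gcongr
    _ = (Real.exp (-(lam * M)) * Real.exp (2 * ‖B‖ * lam) * Real.exp (2 * ‖B‖ * lam)
          * Real.exp (lam * N)) * ‖eH' * A * eH'm‖ := by ring
    _ = Real.exp (-lam * (M - N - 4 * ‖B‖)) * ‖eH' * A * eH'm‖ := by
        rw [← Real.exp_add, ← Real.exp_add, ← Real.exp_add]
        congr 1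
        ring
end

section
/- Let V be a finite-dimensional complex inner product space, let H' and B be self-adjoint linear endomorphisms of V, set H := H' + B, and let λ > 0. Assume that for every u ∈ [0, λ], ‖e^{uH'}·B·e^{−uH'}‖ ≤ 2‖B‖. Then for every ε ≥ 0 and every N > 0, ‖(id_V − E^{H'}((−N,N)))·E^H([−ε,ε])‖ ≤ 2√2·exp(−λ(N − 2ε − 6‖B‖)). -/
lemma exp_apply_eigen {V : Type*} [NormedAddCommGroup V] [InnerProductSpace ℂ V]
    [CompleteSpace V] (A : V →L[ℂ] V) (μ : ℂ) (v : V) (h : A v = μ • v) :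
    NormedSpace.exp A v = Complex.exp μ • v := by
  have hpow : ∀ k : ℕ, (A ^ k) v = μ ^ k • v := by
    intro k; induction k with
    | zero => simp
    | succ k ih =>
        rw [pow_succ, ContinuousLinearMap.mul_apply, h, map_smul, ih, smul_smul, pow_succ,
          mul_comm]
  have hsum : Summable fun n : ℕ => (n.factorial : ℂ)⁻¹ • A ^ n :=
    NormedSpace.expSeries_summable' A
  have hs : Summable fun n : ℕ => (n.factorial : ℂ)⁻¹ * μ ^ n := by
    have := NormedSpace.expSeries_summable' (𝕂 := ℂ) μ
    simpa [smul_eq_mul] using this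
  have h1 : NormedSpace.exp A v = ∑' n : ℕ, ((n.factorial : ℂ)⁻¹ • A ^ n) v := by
    rw [NormedSpace.exp_eq_tsum (𝕂 := ℂ)]
    exact ((ContinuousLinearMap.apply ℂ V v).map_tsum hsum)
  have h2 : ∀ n : ℕ, ((n.factorial : ℂ)⁻¹ • A ^ n) v = ((n.factorial : ℂ)⁻¹ * μ ^ n) • v := by
    intro n
    rw [ContinuousLinearMap.smul_apply, hpow, smul_smul]
  have h3 : Complex.exp μ = ∑' n : ℕ, (n.factorial : ℂ)⁻¹ * μ ^ n := by
    rw [Complex.exp_eq_exp_ℂ, NormedSpace.exp_eq_tsum (𝕂 := ℂ)]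
    simp_rw [smul_eq_mul]
  rw [h1, h3]
  simp_rw [h2]
  exact hs.tsum_smul_const v

open Module.End in
lemma inner_eigen_zero {V : Type*} [NormedAddCommGroup V] [InnerProductSpace ℂ V]
    (T : V →L[ℂ] V) (hT : (↑T : V →ₗ[ℂ] V).IsSymmetric)
    (I : Set ℝ) (ν : ℝ) (hν : ν ∉ I) (v : V)
    (hv : v ∈ Module.End.eigenspace (↑T : V →ₗ[ℂ] V) (ν : ℂ)) (w : V)
    (hw : w ∈ ⨆ μ ∈ I, Module.End.eigenspace (↑T : V →ₗ[ℂ] V) (μ : ℂ)) :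
    inner ℂ v w = (0 : ℂ) := by
  have hle : (⨆ μ ∈ I, Module.End.eigenspace (↑T : V →ₗ[ℂ] V) (μ : ℂ)) ≤ (ℂ ∙ v)ᗮ := by
    refine iSup₂_le fun μ hμ => ?_
    intro y hy
    rw [Submodule.mem_orthogonal]
    rintro u hu
    obtain ⟨c, rfl⟩ := Submodule.mem_span_singleton.mp hu
    rw [inner_smul_left]
    have hvy : inner ℂ v y = (0 : ℂ) := by
      have hne : (ν : ℂ) ≠ (μ : ℂ) := fun hh => hν ((Complex.ofReal_inj.mp hh) ▸ hμ)
      exact hT.orthogonalFamily_eigenspaces hne ⟨v, hv⟩ ⟨y, hy⟩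
    rw [hvy, mul_zero]
  exact (Submodule.mem_orthogonal _ w).mp (hle hw) v (Submodule.mem_span_singleton_self v)

lemma exp_add_of_commute_clm {V : Type*} [NormedAddCommGroup V] [InnerProductSpace ℂ V]
    [CompleteSpace V] {x y : V →L[ℂ] V} (h : Commute x y) :
    NormedSpace.exp (x + y) = NormedSpace.exp x * NormedSpace.exp y :=
  NormedSpace.exp_add_of_commute_of_mem_ball (𝕂 := ℂ) h
    ((NormedSpace.expSeries_radius_eq_top ℂ (V →L[ℂ] V)).symm ▸ edist_lt_top _ _)
    ((NormedSpace.expSeries_radius_eq_top ℂ (V →L[ℂ] V)).symm ▸ edist_lt_top _ _)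

open NormedSpace Set in
lemma interaction_norm_le {V : Type*} [NormedAddCommGroup V] [InnerProductSpace ℂ V]
    [CompleteSpace V] (A C : V →L[ℂ] V) (lam K : ℝ) (hlam : 0 ≤ lam)
    (hK : ∀ u ∈ Set.Icc (0 : ℝ) lam,
      ‖NormedSpace.exp ((u : ℂ) • A) * (A + C) * NormedSpace.exp (-((u : ℂ) • A))‖ ≤ K) :
    ‖NormedSpace.exp ((lam : ℂ) • A) * NormedSpace.exp ((lam : ℂ) • C)‖ ≤
      Real.exp (K * lam) := by
  set f : ℝ → (V →L[ℂ] V) := fun u => exp ((u : ℂ) • A) * exp ((u : ℂ) • C) with hf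
  set D : ℝ → (V →L[ℂ] V) := fun u =>
    exp ((u : ℂ) • A) * (A + C) * exp (-((u : ℂ) • A)) with hD
  have hderiv : ∀ u : ℝ, HasDerivAt f (D u * f u) u := by
    intro u
    have h1c : HasDerivAt (fun z : ℂ => exp (z • A)) (exp ((u : ℂ) • A) * A) (u : ℂ) :=
      hasDerivAt_exp_smul_const A (u : ℂ)
    have h2c : HasDerivAt (fun z : ℂ => exp (z • C)) (C * exp ((u : ℂ) • C)) (u : ℂ) :=
      hasDerivAt_exp_smul_const' C (u : ℂ)
    have h1 : HasDerivAt (fun t : ℝ => exp ((t : ℂ) • A)) (exp ((u : ℂ) • A) * A) u := by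
      simpa [Function.comp_def] using h1c.scomp u Complex.ofRealCLM.hasDerivAt
    have h2 : HasDerivAt (fun t : ℝ => exp ((t : ℂ) • C)) (C * exp ((u : ℂ) • C)) u := by
      simpa [Function.comp_def] using h2c.scomp u Complex.ofRealCLM.hasDerivAt
    have h3 := h1.mul h2
    refine h3.congr_deriv ?_
    symm
    have hinv : exp (-((u : ℂ) • A)) * exp ((u : ℂ) • A) = 1 := by
      rw [← exp_add_of_commute_clm (V := V) (Commute.neg_left rfl), neg_add_cancel, exp_zero]
    calc D u * f u
        = exp ((u : ℂ) • A) * (A + C) *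
            (exp (-((u : ℂ) • A)) * exp ((u : ℂ) • A)) * exp ((u : ℂ) • C) := by
          simp only [hD, hf]; noncomm_ring
      _ = exp ((u : ℂ) • A) * (A + C) * exp ((u : ℂ) • C) := by rw [hinv, mul_one]
      _ = exp ((u : ℂ) • A) * A * exp ((u : ℂ) • C) +
            exp ((u : ℂ) • A) * (C * exp ((u : ℂ) • C)) := by noncomm_ring
  have hcont : ContinuousOn f (Icc 0 lam) :=
    fun u _ => ((hderiv u).continuousAt).continuousWithinAt
  have hbound : ∀ u ∈ Ico 0 lam, ‖D u * f u‖ ≤ K * ‖f u‖ + 0 := by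
    intro u hu
    rw [add_zero]
    exact le_trans (norm_mul_le _ _)
      (mul_le_mul_of_nonneg_right (hK u ⟨hu.1, hu.2.le⟩) (norm_nonneg _))
  have h0 : ‖f 0‖ ≤ 1 := by
    simp only [hf, Complex.ofReal_zero, zero_smul, exp_zero, mul_one]
    rw [ContinuousLinearMap.one_def]
    exact ContinuousLinearMap.norm_id_le
  have := norm_le_gronwallBound_of_norm_deriv_right_le hcont
    (fun u _ => (hderiv u).hasDerivWithinAt) h0 hbound lam ⟨hlam, le_refl _⟩
  rwa [gronwallBound_ε0, sub_zero, one_mul] at this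

open Module.End Finset in
lemma onb_norm_sq {V : Type*} [NormedAddCommGroup V] [InnerProductSpace ℂ V]
    [FiniteDimensional ℂ V] {ι : Type*} [Fintype ι] (b : OrthonormalBasis ι ℂ V) (w : V) :
    ‖w‖ ^ 2 = ∑ i, ‖b.repr w i‖ ^ 2 := by
  rw [← b.repr.norm_map w, EuclideanSpace.norm_eq, Real.sq_sqrt (by positivity)]

lemma exp_smul_eigenvectorBasis {V : Type*} [NormedAddCommGroup V] [InnerProductSpace ℂ V]
    [FiniteDimensional ℂ V] (T : V →L[ℂ] V) (hT : (↑T : V →ₗ[ℂ] V).IsSymmetric)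
    {n : ℕ} (hn : Module.finrank ℂ V = n) (t : ℝ) (i : Fin n) :
    NormedSpace.exp ((t : ℂ) • T) (hT.eigenvectorBasis hn i) =
      Complex.exp ((t * hT.eigenvalues hn i : ℝ) : ℂ) • hT.eigenvectorBasis hn i := by
  apply exp_apply_eigen
  have h1 : T (hT.eigenvectorBasis hn i) =
      ((hT.eigenvalues hn i : ℝ) : ℂ) • hT.eigenvectorBasis hn i :=
    hT.apply_eigenvectorBasis hn i
  rw [ContinuousLinearMap.smul_apply, h1, smul_smul]
  push_cast
  ring_nf

lemma isSelfAdjoint_exp_smul {V : Type*} [NormedAddCommGroup V] [InnerProductSpace ℂ V]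
    [FiniteDimensional ℂ V] (T : V →L[ℂ] V) (hT : IsSelfAdjoint T) (t : ℝ) :
    IsSelfAdjoint (NormedSpace.exp ((t : ℂ) • T)) := by
  rw [IsSelfAdjoint, NormedSpace.star_exp]
  congr 1
  rw [star_smul, hT.star_eq, Complex.star_def, Complex.conj_ofReal]

lemma repr_exp_smul {V : Type*} [NormedAddCommGroup V] [InnerProductSpace ℂ V]
    [FiniteDimensional ℂ V] (T : V →L[ℂ] V) (hT : IsSelfAdjoint T)
    {n : ℕ} (hn : Module.finrank ℂ V = n) (t : ℝ) (w : V) (i : Fin n) :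
    (hT.isSymmetric.eigenvectorBasis hn).repr (NormedSpace.exp ((t : ℂ) • T) w) i =
      Complex.exp ((t * hT.isSymmetric.eigenvalues hn i : ℝ) : ℂ) *
        (hT.isSymmetric.eigenvectorBasis hn).repr w i := by
  set b := hT.isSymmetric.eigenvectorBasis hn with hb
  rw [b.repr_apply_apply, b.repr_apply_apply]
  have hsym := (isSelfAdjoint_exp_smul T hT t).isSymmetric
  have h1 := (hsym (b i) w).symm
  simp only [ContinuousLinearMap.coe_coe] at h1
  rw [h1, exp_smul_eigenvectorBasis T hT.isSymmetric hn t i, inner_smul_left,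
    ← Complex.ofReal_exp, Complex.conj_ofReal]

lemma repr_eq_zero_of_not_mem {V : Type*} [NormedAddCommGroup V] [InnerProductSpace ℂ V]
    [FiniteDimensional ℂ V] (T : V →L[ℂ] V) (hT : IsSelfAdjoint T)
    {n : ℕ} (hn : Module.finrank ℂ V = n) (I : Set ℝ) (i : Fin n)
    (hi : hT.isSymmetric.eigenvalues hn i ∉ I) (y : V)
    (hy : y ∈ ⨆ μ ∈ I, Module.End.eigenspace (↑T : V →ₗ[ℂ] V) (μ : ℂ)) :
    (hT.isSymmetric.eigenvectorBasis hn).repr y i = 0 := by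
  rw [OrthonormalBasis.repr_apply_apply]
  exact inner_eigen_zero T hT.isSymmetric I _ hi _
    (Module.End.mem_eigenspace_iff.mpr (hT.isSymmetric.apply_eigenvectorBasis hn i)) y hy

open Finset in
lemma norm_exp_smul_le_of_mem {V : Type*} [NormedAddCommGroup V] [InnerProductSpace ℂ V]
    [FiniteDimensional ℂ V] (T : V →L[ℂ] V) (hT : IsSelfAdjoint T)
    (I : Set ℝ) (t C : ℝ) (hC : 0 ≤ C) (hbd : ∀ μ ∈ I, Real.exp (t * μ) ≤ C) (y : V)
    (hy : y ∈ ⨆ μ ∈ I, Module.End.eigenspace (↑T : V →ₗ[ℂ] V) (μ : ℂ)) :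
    ‖NormedSpace.exp ((t : ℂ) • T) y‖ ≤ C * ‖y‖ := by
  have hn : Module.finrank ℂ V = Module.finrank ℂ V := rfl
  set b := hT.isSymmetric.eigenvectorBasis hn with hb
  set ν := hT.isSymmetric.eigenvalues hn with hν
  have hsq : ‖NormedSpace.exp ((t : ℂ) • T) y‖ ^ 2 ≤ (C * ‖y‖) ^ 2 := by
    rw [onb_norm_sq b, mul_pow, onb_norm_sq b y, mul_sum]
    apply Finset.sum_le_sum
    intro i _
    rw [repr_exp_smul T hT hn t y i]
    by_cases hiI : ν i ∈ I
    · rw [norm_mul, mul_pow]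
      apply mul_le_mul_of_nonneg_right _ (by positivity)
      have : ‖Complex.exp ((t * ν i : ℝ) : ℂ)‖ = Real.exp (t * ν i) := by
        rw [← Complex.ofReal_exp, Complex.norm_real, Real.norm_eq_abs, Real.abs_exp]
      rw [this]
      exact pow_le_pow_left₀ (Real.exp_nonneg _) (hbd _ hiI) 2
    · rw [repr_eq_zero_of_not_mem T hT hn I i hiI y hy]
      simp
  have h := Real.sqrt_le_sqrt hsq
  rwa [Real.sqrt_sq (norm_nonneg _), Real.sqrt_sq (by positivity)] at h

lemma specProj_apply {V : Type*} [NormedAddCommGroup V] [InnerProductSpace ℂ V]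
    [FiniteDimensional ℂ V] (T : V →L[ℂ] V) (I : Set ℝ) (v : V) :
    specProj T I v =
      ↑(Submodule.orthogonalProjectionOnto (⨆ μ ∈ I, Module.End.eigenspace (↑T : V →ₗ[ℂ] V) (μ : ℂ)) v) :=
  rfl

set_option maxHeartbeats 1000000 in
open NormedSpace Finset in
/-- Finite-volume overlap estimate (AKL Thm 2.2 form): with `H = H' + B` and the
real Hadamard bound for `e^{uH'} B e^{−uH'}` on `[0,λ]`, for `ε ≥ 0`, `N > 0`,
`‖(I − E^{H'}((−N,N)))·E^H([−ε,ε])‖ ≤ 2√2·e^{−λ(N−2ε−6‖B‖)}`. -/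
theorem stmt_6 {V : Type*} [NormedAddCommGroup V] [InnerProductSpace ℂ V]
    [FiniteDimensional ℂ V]
    (H' B : V →L[ℂ] V) (hH' : IsSelfAdjoint H') (hB : IsSelfAdjoint B)
    (lam : ℝ) (hlam : 0 < lam)
    (hHad : ∀ u ∈ Set.Icc (0 : ℝ) lam,
      ‖NormedSpace.exp ((u : ℂ) • H') * B *
          NormedSpace.exp (-((u : ℂ) • H'))‖ ≤ 2 * ‖B‖) :
    ∀ (ε N : ℝ), 0 ≤ ε → 0 < N →
      ‖((1 : V →L[ℂ] V) - specProj H' (Set.Ioo (-N) N)) *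
          specProj (H' + B) (Set.Icc (-ε) ε)‖ ≤
        2 * Real.sqrt 2 * Real.exp (-lam * (N - 2 * ε - 6 * ‖B‖)) := by
  intro ε N hε hN
  have hB0 : (0 : ℝ) ≤ ‖B‖ := norm_nonneg B
  set H : V →L[ℂ] V := H' + B with hHdef
  have hH_sa : IsSelfAdjoint H := hH'.add hB
  -- interaction picture bounds
  have hIB1 : ‖exp ((lam : ℂ) • H') * exp ((lam : ℂ) • (-H))‖ ≤
      Real.exp (2 * ‖B‖ * lam) := by
    apply interaction_norm_le H' (-H) lam (2 * ‖B‖) hlam.le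
    intro u hu
    have h1 : H' + -H = -B := by rw [hHdef]; abel
    rw [h1, mul_neg, neg_mul, norm_neg]
    exact hHad u hu
  have hHad' : ∀ u ∈ Set.Icc (0 : ℝ) lam,
      ‖exp ((u : ℂ) • (-H')) * (-H' + H) * exp (-((u : ℂ) • (-H')))‖ ≤ 2 * ‖B‖ := by
    intro u hu
    have h1 : -H' + H = B := by rw [hHdef]; abel
    have h2 : (u : ℂ) • (-H') = -((u : ℂ) • H') := by rw [smul_neg]
    rw [h1, h2, neg_neg]
    have hneg : -((u : ℂ) • H') = (((-u : ℝ)) : ℂ) • H' := by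
      rw [Complex.ofReal_neg, neg_smul]
    have hstar : exp (-((u : ℂ) • H')) * B * exp ((u : ℂ) • H') =
        star (exp ((u : ℂ) • H') * B * exp (-((u : ℂ) • H'))) := by
      rw [star_mul, star_mul, hB.star_eq, (isSelfAdjoint_exp_smul H' hH' u).star_eq]
      have hx : star (exp (-((u : ℂ) • H'))) = exp (-((u : ℂ) • H')) := by
        rw [hneg]; exact (isSelfAdjoint_exp_smul H' hH' (-u)).star_eq
      rw [hx, mul_assoc]
    have hns : ‖star (exp ((u : ℂ) • H') * B * exp (-((u : ℂ) • H')))‖ =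
        ‖exp ((u : ℂ) • H') * B * exp (-((u : ℂ) • H'))‖ :=
      norm_star (exp ((u : ℂ) • H') * B * exp (-((u : ℂ) • H')))
    rw [hstar, hns]
    exact hHad u hu
  have hIB2 : ‖exp ((lam : ℂ) • (-H')) * exp ((lam : ℂ) • H)‖ ≤
      Real.exp (2 * ‖B‖ * lam) :=
    interaction_norm_le (-H') H lam (2 * ‖B‖) hlam.le hHad'
  apply ContinuousLinearMap.opNorm_le_bound _ (by positivity)
  intro x
  rw [ContinuousLinearMap.mul_apply, ContinuousLinearMap.sub_apply,
    ContinuousLinearMap.one_apply, specProj_apply, specProj_apply]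
  set y : V := (Submodule.orthogonalProjectionOnto (⨆ μ ∈ Set.Icc (-ε) ε,
      Module.End.eigenspace (↑H : V →ₗ[ℂ] V) (μ : ℂ)) x : V) with hydef
  set z : V := y - (Submodule.orthogonalProjectionOnto (⨆ μ ∈ Set.Ioo (-N) N,
      Module.End.eigenspace (↑H' : V →ₗ[ℂ] V) (μ : ℂ)) y : V) with hzdef
  have hyS : y ∈ (⨆ μ ∈ Set.Icc (-ε) ε,
      Module.End.eigenspace (↑H : V →ₗ[ℂ] V) (μ : ℂ)) := Submodule.coe_mem _
  have hzperp : z ∈ (⨆ μ ∈ Set.Ioo (-N) N,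
      Module.End.eigenspace (↑H' : V →ₗ[ℂ] V) (μ : ℂ))ᗮ :=
    Submodule.sub_starProjection_mem_orthogonal y
  have hynorm : ‖y‖ ≤ ‖x‖ := by
    rw [hydef]
    calc (‖(Submodule.orthogonalProjectionOnto (⨆ μ ∈ Set.Icc (-ε) ε,
            Module.End.eigenspace (↑H : V →ₗ[ℂ] V) (μ : ℂ)) x : V)‖ : ℝ)
        = ‖Submodule.orthogonalProjectionOnto (⨆ μ ∈ Set.Icc (-ε) ε,
            Module.End.eigenspace (↑H : V →ₗ[ℂ] V) (μ : ℂ)) x‖ := rfl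
      _ ≤ ‖Submodule.orthogonalProjectionOnto (⨆ μ ∈ Set.Icc (-ε) ε,
            Module.End.eigenspace (↑H : V →ₗ[ℂ] V) (μ : ℂ))‖ * ‖x‖ :=
          ContinuousLinearMap.le_opNorm _ x
      _ ≤ 1 * ‖x‖ := mul_le_mul_of_nonneg_right (Submodule.orthogonalProjectionOnto_norm_le _) (norm_nonneg x)
      _ = ‖x‖ := one_mul _
  -- eigenbasis of H'
  have hn : Module.finrank ℂ V = Module.finrank ℂ V := rfl
  set b := hH'.isSymmetric.eigenvectorBasis hn with hbdef
  set ν := hH'.isSymmetric.eigenvalues hn with hνdef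
  set wp : V := NormedSpace.exp ((lam : ℂ) • H') y with hwp
  set wm : V := NormedSpace.exp (((-lam : ℝ) : ℂ) • H') y with hwm
  have hex : ∀ r : ℝ, ‖Complex.exp ((r : ℝ) : ℂ)‖ = Real.exp r := fun r => by
    rw [← Complex.ofReal_exp, Complex.norm_real, Real.norm_eq_abs, Real.abs_exp]
  have key : ∀ i, ‖b.repr z i‖ ^ 2 ≤
      Real.exp (-(2 * lam * N)) * (‖b.repr wp i‖ ^ 2 + ‖b.repr wm i‖ ^ 2) := by
    intro i
    by_cases hio : ν i ∈ Set.Ioo (-N) N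
    · have hz0 : b.repr z i = 0 := by
        rw [OrthonormalBasis.repr_apply_apply]
        have hbi : b i ∈ (⨆ μ ∈ Set.Ioo (-N) N,
            Module.End.eigenspace (↑H' : V →ₗ[ℂ] V) (μ : ℂ)) := by
          have h1 : Module.End.eigenspace (↑H' : V →ₗ[ℂ] V) ((ν i : ℝ) : ℂ) ≤
              ⨆ μ ∈ Set.Ioo (-N) N,
                Module.End.eigenspace (↑H' : V →ₗ[ℂ] V) (μ : ℂ) :=
            le_iSup₂ (f := fun (μ : ℝ) (_ : μ ∈ Set.Ioo (-N) N) =>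
              Module.End.eigenspace (↑H' : V →ₗ[ℂ] V) (μ : ℂ)) (ν i) hio
          exact h1 (Module.End.mem_eigenspace_iff.mpr
            (hH'.isSymmetric.apply_eigenvectorBasis hn i))
        exact (Submodule.mem_orthogonal _ z).mp hzperp (b i) hbi
      have h9 : (0 : ℝ) ≤ Real.exp (-(2 * lam * N)) *
          (‖b.repr wp i‖ ^ 2 + ‖b.repr wm i‖ ^ 2) := by positivity
      rw [hz0]
      simpa using h9
    · have hzy : b.repr z i = b.repr y i := by
        have h0 : b.repr ((Submodule.orthogonalProjectionOnto (⨆ μ ∈ Set.Ioo (-N) N,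
            Module.End.eigenspace (↑H' : V →ₗ[ℂ] V) (μ : ℂ)) y : V)) i = 0 :=
          repr_eq_zero_of_not_mem H' hH' hn _ i hio _ (Submodule.coe_mem _)
        rw [hzdef, map_sub, WithLp.ofLp_sub, Pi.sub_apply, h0, sub_zero]
      have hwp_i : b.repr wp i = Complex.exp ((lam * ν i : ℝ) : ℂ) * b.repr y i :=
        repr_exp_smul H' hH' hn lam y i
      have hwm_i : b.repr wm i = Complex.exp (((-lam) * ν i : ℝ) : ℂ) * b.repr y i :=
        repr_exp_smul H' hH' hn (-lam) y i
      rw [hzy, hwp_i, hwm_i, norm_mul, norm_mul, hex, hex]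
      set c := ‖b.repr y i‖ with hc
      have hc0 : 0 ≤ c := norm_nonneg _
      rcases le_or_gt N (ν i) with hge | hlt
      · have h2 : (1 : ℝ) ≤ Real.exp (-(2 * lam * N)) * Real.exp (lam * ν i) ^ 2 := by
          rw [sq, ← Real.exp_add, ← Real.exp_add]
          apply Real.one_le_exp
          nlinarith
        calc c ^ 2 = 1 * c ^ 2 := (one_mul _).symm
          _ ≤ (Real.exp (-(2 * lam * N)) * Real.exp (lam * ν i) ^ 2) * c ^ 2 :=
              mul_le_mul_of_nonneg_right h2 (sq_nonneg c)
          _ = Real.exp (-(2 * lam * N)) * (Real.exp (lam * ν i) * c) ^ 2 := by ring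
          _ ≤ Real.exp (-(2 * lam * N)) *
                ((Real.exp (lam * ν i) * c) ^ 2 + (Real.exp ((-lam) * ν i) * c) ^ 2) :=
              mul_le_mul_of_nonneg_left (le_add_of_nonneg_right (sq_nonneg _))
                (Real.exp_nonneg _)
      · have hle : ν i ≤ -N := by
          by_contra hcon
          push_neg at hcon
          exact hio ⟨hcon, hlt⟩
        have h2 : (1 : ℝ) ≤ Real.exp (-(2 * lam * N)) * Real.exp ((-lam) * ν i) ^ 2 := by
          rw [sq, ← Real.exp_add, ← Real.exp_add]
          apply Real.one_le_exp
          nlinarith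
        calc c ^ 2 = 1 * c ^ 2 := (one_mul _).symm
          _ ≤ (Real.exp (-(2 * lam * N)) * Real.exp ((-lam) * ν i) ^ 2) * c ^ 2 :=
              mul_le_mul_of_nonneg_right h2 (sq_nonneg c)
          _ = Real.exp (-(2 * lam * N)) * (Real.exp ((-lam) * ν i) * c) ^ 2 := by ring
          _ ≤ Real.exp (-(2 * lam * N)) *
                ((Real.exp (lam * ν i) * c) ^ 2 + (Real.exp ((-lam) * ν i) * c) ^ 2) :=
              mul_le_mul_of_nonneg_left (le_add_of_nonneg_left (sq_nonneg _))
                (Real.exp_nonneg _)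
  have hzsq : ‖z‖ ^ 2 ≤ Real.exp (-(2 * lam * N)) * (‖wp‖ ^ 2 + ‖wm‖ ^ 2) := by
    rw [onb_norm_sq b z, onb_norm_sq b wp, onb_norm_sq b wm]
    calc ∑ i, ‖b.repr z i‖ ^ 2
        ≤ ∑ i, Real.exp (-(2 * lam * N)) * (‖b.repr wp i‖ ^ 2 + ‖b.repr wm i‖ ^ 2) :=
          Finset.sum_le_sum fun i _ => key i
      _ = Real.exp (-(2 * lam * N)) *
            (∑ i, ‖b.repr wp i‖ ^ 2 + ∑ i, ‖b.repr wm i‖ ^ 2) := by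
          rw [← Finset.mul_sum, Finset.sum_add_distrib]
  -- bounds via the interaction picture
  have hEy1 : ‖NormedSpace.exp ((lam : ℂ) • H) y‖ ≤ Real.exp (lam * ε) * ‖y‖ := by
    apply norm_exp_smul_le_of_mem H hH_sa _ lam _ (Real.exp_nonneg _) _ y hyS
    intro μ hμ
    exact Real.exp_le_exp.mpr (by nlinarith [hμ.1, hμ.2])
  have hEy2 : ‖NormedSpace.exp (((-lam : ℝ) : ℂ) • H) y‖ ≤ Real.exp (lam * ε) * ‖y‖ := by
    apply norm_exp_smul_le_of_mem H hH_sa _ (-lam) _ (Real.exp_nonneg _) _ y hyS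
    intro μ hμ
    exact Real.exp_le_exp.mpr (by nlinarith [hμ.1, hμ.2])
  have hwp_norm : ‖wp‖ ≤ Real.exp (2 * ‖B‖ * lam) * (Real.exp (lam * ε) * ‖y‖) := by
    have hone : exp ((lam : ℂ) • (-H)) * exp ((lam : ℂ) • H) = 1 := by
      rw [smul_neg]
      rw [← exp_add_of_commute_clm (Commute.neg_left (Commute.refl ((lam : ℂ) • H)))]
      rw [neg_add_cancel, exp_zero]
    have hid : wp = (exp ((lam : ℂ) • H') * exp ((lam : ℂ) • (-H)))
        (NormedSpace.exp ((lam : ℂ) • H) y) := by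
      rw [hwp, ContinuousLinearMap.mul_apply, ← ContinuousLinearMap.mul_apply
        (exp ((lam : ℂ) • (-H))) (exp ((lam : ℂ) • H)), hone,
        ContinuousLinearMap.one_apply]
    rw [hid]
    calc ‖(exp ((lam : ℂ) • H') * exp ((lam : ℂ) • (-H)))
          (NormedSpace.exp ((lam : ℂ) • H) y)‖
        ≤ ‖exp ((lam : ℂ) • H') * exp ((lam : ℂ) • (-H))‖ *
            ‖NormedSpace.exp ((lam : ℂ) • H) y‖ := ContinuousLinearMap.le_opNorm _ _
      _ ≤ Real.exp (2 * ‖B‖ * lam) * (Real.exp (lam * ε) * ‖y‖) :=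
          mul_le_mul hIB1 hEy1 (norm_nonneg _) (Real.exp_nonneg _)
  have hwm_norm : ‖wm‖ ≤ Real.exp (2 * ‖B‖ * lam) * (Real.exp (lam * ε) * ‖y‖) := by
    have hmeq : exp ((lam : ℂ) • (-H')) = exp (((-lam : ℝ) : ℂ) • H') := by
      rw [smul_neg, Complex.ofReal_neg, neg_smul]
    have hone : exp ((lam : ℂ) • H) * exp (((-lam : ℝ) : ℂ) • H) = 1 := by
      rw [Complex.ofReal_neg, neg_smul]
      rw [← exp_add_of_commute_clm (Commute.neg_right (Commute.refl ((lam : ℂ) • H)))]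
      rw [add_neg_cancel, exp_zero]
    have hid : wm = (exp ((lam : ℂ) • (-H')) * exp ((lam : ℂ) • H))
        (NormedSpace.exp (((-lam : ℝ) : ℂ) • H) y) := by
      rw [hwm, hmeq, ContinuousLinearMap.mul_apply, ← ContinuousLinearMap.mul_apply
        (exp ((lam : ℂ) • H)) (exp (((-lam : ℝ) : ℂ) • H)), hone,
        ContinuousLinearMap.one_apply]
    rw [hid]
    calc ‖(exp ((lam : ℂ) • (-H')) * exp ((lam : ℂ) • H))
          (NormedSpace.exp (((-lam : ℝ) : ℂ) • H) y)‖
        ≤ ‖exp ((lam : ℂ) • (-H')) * exp ((lam : ℂ) • H)‖ *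
            ‖NormedSpace.exp (((-lam : ℝ) : ℂ) • H) y‖ := ContinuousLinearMap.le_opNorm _ _
      _ ≤ Real.exp (2 * ‖B‖ * lam) * (Real.exp (lam * ε) * ‖y‖) :=
          mul_le_mul hIB2 hEy2 (norm_nonneg _) (Real.exp_nonneg _)
  -- final combination
  have hfin : ‖z‖ ^ 2 ≤
      (2 * Real.sqrt 2 * Real.exp (-lam * (N - 2 * ε - 6 * ‖B‖)) * ‖x‖) ^ 2 := by
    have step1 : ‖z‖ ^ 2 ≤ Real.exp (-(2 * lam * N)) *
        ((Real.exp (2 * ‖B‖ * lam) * (Real.exp (lam * ε) * ‖y‖)) ^ 2 +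
         (Real.exp (2 * ‖B‖ * lam) * (Real.exp (lam * ε) * ‖y‖)) ^ 2) := by
      refine le_trans hzsq (mul_le_mul_of_nonneg_left ?_ (Real.exp_nonneg _))
      exact add_le_add (pow_le_pow_left₀ (norm_nonneg _) hwp_norm 2)
        (pow_le_pow_left₀ (norm_nonneg _) hwm_norm 2)
    have step2 : Real.exp (-(2 * lam * N)) *
        ((Real.exp (2 * ‖B‖ * lam) * (Real.exp (lam * ε) * ‖y‖)) ^ 2 +
         (Real.exp (2 * ‖B‖ * lam) * (Real.exp (lam * ε) * ‖y‖)) ^ 2) =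
        2 * (Real.exp (-(2 * lam * N)) * Real.exp (2 * ‖B‖ * lam) ^ 2 *
          Real.exp (lam * ε) ^ 2) * ‖y‖ ^ 2 := by ring
    have step3 : Real.exp (-(2 * lam * N)) * Real.exp (2 * ‖B‖ * lam) ^ 2 *
        Real.exp (lam * ε) ^ 2 ≤ Real.exp (-lam * (N - 2 * ε - 6 * ‖B‖)) ^ 2 := by
      simp only [sq, ← Real.exp_add]
      apply Real.exp_le_exp.mpr
      nlinarith [mul_nonneg hlam.le hε, mul_nonneg hlam.le hB0]
    have hy2 : ‖y‖ ^ 2 ≤ ‖x‖ ^ 2 := pow_le_pow_left₀ (norm_nonneg _) hynorm 2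
    have hrhs : (2 * Real.sqrt 2 * Real.exp (-lam * (N - 2 * ε - 6 * ‖B‖)) * ‖x‖) ^ 2 =
        8 * Real.exp (-lam * (N - 2 * ε - 6 * ‖B‖)) ^ 2 * ‖x‖ ^ 2 := by
      have h22 : Real.sqrt 2 ^ 2 = 2 := Real.sq_sqrt (by norm_num)
      rw [mul_pow, mul_pow, mul_pow, h22]
      ring
    rw [hrhs]
    calc ‖z‖ ^ 2 ≤ 2 * (Real.exp (-(2 * lam * N)) * Real.exp (2 * ‖B‖ * lam) ^ 2 *
          Real.exp (lam * ε) ^ 2) * ‖y‖ ^ 2 := by rw [← step2]; exact step1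
      _ ≤ 2 * Real.exp (-lam * (N - 2 * ε - 6 * ‖B‖)) ^ 2 * ‖x‖ ^ 2 := by
          apply mul_le_mul
          · exact mul_le_mul_of_nonneg_left step3 (by norm_num)
          · exact hy2
          · positivity
          · positivity
      _ ≤ 8 * Real.exp (-lam * (N - 2 * ε - 6 * ‖B‖)) ^ 2 * ‖x‖ ^ 2 := by
          nlinarith [mul_nonneg (sq_nonneg (Real.exp (-lam * (N - 2 * ε - 6 * ‖B‖))))
            (sq_nonneg ‖x‖)]
  have hfinal := Real.sqrt_le_sqrt hfin
  rwa [Real.sqrt_sq (norm_nonneg _), Real.sqrt_sq (by positivity)] at hfinal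
end

section
/- Let V be a finite-dimensional complex inner product space, let H' and B be self-adjoint linear endomorphisms of V, let M ∈ ℝ be such that every eigenvalue of H' is strictly greater than −M, and let S > 0. Define the energy-truncated operator H̄' := H'·E^{H'}((−M,M)) + M·E^{H'}([M,∞)). Assume that for every s ∈ ℂ with |s| < S, ‖e^{sH'}·B·e^{−sH'}‖ ≤ ‖B‖/(1 − |s|/S). Then for every s ∈ ℂ with |s| < S, ‖e^{sH̄'}·B·e^{−sH̄'}‖ ≤ 2‖B‖ + ‖B‖/(1 − |s|/S). -/
/-- The energy-truncated operator `T̄ := T·E^T((−M,M)) + M·E^T([M,∞))`. -/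
noncomputable def etrunc {V : Type*} [NormedAddCommGroup V] [InnerProductSpace ℂ V]
    [FiniteDimensional ℂ V] (T : V →L[ℂ] V) (M : ℝ) : V →L[ℂ] V :=
  T * specProj T (Set.Ioo (-M) M) + (M : ℂ) • specProj T (Set.Ici M)

open Module
open scoped Classical

lemma exp_apply_eigenvector {V : Type*} [NormedAddCommGroup V] [InnerProductSpace ℂ V]
    [CompleteSpace V] (A : V →L[ℂ] V) (c : ℂ) (x : V) (h : A x = c • x) :
    NormedSpace.exp A x = Complex.exp c • x := by
  have hpow : ∀ n : ℕ, (A ^ n) x = c ^ n • x := by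
    intro n; induction n with
    | zero => simp
    | succ n ih =>
      rw [pow_succ, pow_succ, ContinuousLinearMap.mul_apply, h, map_smul, ih, smul_smul,
        mul_comm]
  have h1 : NormedSpace.exp A x = ∑' n : ℕ, ((n.factorial : ℂ)⁻¹ • A ^ n) x := by
    rw [NormedSpace.exp_eq_tsum ℂ]
    exact ((ContinuousLinearMap.apply ℂ V x).map_tsum
      (NormedSpace.expSeries_summable' (𝕂 := ℂ) A))
  rw [h1]
  have h2 : ∀ n : ℕ, ((n.factorial : ℂ)⁻¹ • A ^ n) x = ((n.factorial : ℂ)⁻¹ * c ^ n) • x := by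
    intro n
    rw [ContinuousLinearMap.smul_apply, hpow, smul_smul]
  simp_rw [h2]
  rw [Summable.tsum_smul_const]
  · congr 1
    rw [Complex.exp_eq_exp_ℂ, NormedSpace.exp_eq_tsum ℂ]
    simp [smul_eq_mul]
  · simpa [smul_eq_mul] using NormedSpace.expSeries_summable' (𝕂 := ℂ) c

lemma specProj_apply_eigenvector {V : Type*} [NormedAddCommGroup V] [InnerProductSpace ℂ V]
    [FiniteDimensional ℂ V] (T : V →L[ℂ] V) (hT : (↑T : V →ₗ[ℂ] V).IsSymmetric)
    (I : Set ℝ) (μ : ℝ) (x : V) (hx : T x = (μ : ℂ) • x) :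
    specProj T I x = if μ ∈ I then x else 0 := by
  set U : Submodule ℂ V := ⨆ ν ∈ I, End.eigenspace (↑T : V →ₗ[ℂ] V) (ν : ℂ) with hU
  have hmem : x ∈ End.eigenspace (↑T : V →ₗ[ℂ] V) (μ : ℂ) := End.mem_eigenspace_iff.mpr hx
  by_cases hμ : μ ∈ I
  · have hxU : x ∈ U := by
      exact Submodule.mem_iSup_of_mem μ (Submodule.mem_iSup_of_mem hμ hmem)
    simp only [specProj, hμ, if_true]
    exact Submodule.starProjection_eq_self_iff.mpr hxU
  · have hxU : x ∈ Uᗮ := by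
      have h1 : U ≤ (ℂ ∙ x)ᗮ := by
        apply iSup₂_le
        intro ν hν
        intro v hv
        rw [Submodule.mem_orthogonal_singleton_iff_inner_left]
        have hne : (ν : ℂ) ≠ (μ : ℂ) := by
          simp only [ne_eq, Complex.ofReal_inj]
          rintro rfl; exact hμ hν
        exact hT.orthogonalFamily_eigenspaces hne ⟨v, hv⟩ ⟨x, hmem⟩
      have h2 : (ℂ ∙ x)ᗮᗮ ≤ Uᗮ := Submodule.orthogonal_le h1
      exact h2 (Submodule.le_orthogonal_orthogonal _ (Submodule.mem_span_singleton_self x))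
    simp only [specProj, hμ, if_false]
    rw [ContinuousLinearMap.comp_apply, Submodule.orthogonalProjectionOnto_apply_of_mem_orthogonal hxU, map_zero]

lemma diag_norm_le {V : Type*} [NormedAddCommGroup V] [InnerProductSpace ℂ V]
    [FiniteDimensional ℂ V] {n : ℕ} (b : OrthonormalBasis (Fin n) ℂ V)
    (T : V →L[ℂ] V) (d : Fin n → ℂ) (hT : ∀ i, T (b i) = d i • b i)
    (m : ℝ) (hm : 0 ≤ m) (hd : ∀ i, ‖d i‖ ≤ m) : ‖T‖ ≤ m := by
  refine T.opNorm_le_bound hm ?_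
  intro x
  have hTx : T x = ∑ i, (d i * b.repr x i) • b i := by
    conv_lhs => rw [← b.sum_repr x]
    rw [map_sum]
    congr 1; ext i
    rw [map_smul, hT i, smul_smul, mul_comm]
  have hrepr : ∀ j, b.repr (T x) j = d j * b.repr x j := by
    intro j
    rw [hTx, map_sum]
    simp_rw [map_smul, b.repr_self]
    rw [WithLp.ofLp_sum, Finset.sum_apply]
    simp [EuclideanSpace.single_apply, PiLp.smul_apply, mul_ite]
  have h1 : ‖T x‖ = Real.sqrt (∑ j, ‖d j * b.repr x j‖ ^ 2) := by
    rw [← b.repr.norm_map (T x), EuclideanSpace.norm_eq]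
    congr 1
    exact Finset.sum_congr rfl fun j _ => by rw [hrepr j]
  have h2 : ‖x‖ = Real.sqrt (∑ j, ‖b.repr x j‖ ^ 2) := by
    rw [← b.repr.norm_map x, EuclideanSpace.norm_eq]
  rw [h1, h2, ← Real.sqrt_sq hm, ← Real.sqrt_mul (sq_nonneg m)]
  apply Real.sqrt_le_sqrt
  rw [Finset.mul_sum]
  apply Finset.sum_le_sum
  intro j _
  rw [norm_mul, mul_pow]
  have := hd j
  gcongr

/-- Truncated Hadamard bound: if every eigenvalue of `H'` is `> −M` and
`‖e^{sH'} B e^{−sH'}‖ ≤ ‖B‖/(1−|s|/S)` for `|s| < S`, then the energy-truncated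
operator `H̄'` satisfies `‖e^{sH̄'} B e^{−sH̄'}‖ ≤ 2‖B‖ + ‖B‖/(1−|s|/S)`. -/
theorem stmt_7 {V : Type*} [NormedAddCommGroup V] [InnerProductSpace ℂ V]
    [FiniteDimensional ℂ V]
    (H' B : V →L[ℂ] V) (hH' : IsSelfAdjoint H') (hB : IsSelfAdjoint B)
    (M : ℝ) (hM : ∀ μ : ℝ, Module.End.HasEigenvalue (↑H' : V →ₗ[ℂ] V) (μ : ℂ) → -M < μ)
    (S : ℝ) (hS : 0 < S)
    (hHad : ∀ s : ℂ, ‖s‖ < S →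
      ‖NormedSpace.exp (s • H') * B * NormedSpace.exp (-(s • H'))‖ ≤
        ‖B‖ / (1 - ‖s‖ / S)) :
    ∀ s : ℂ, ‖s‖ < S →
      ‖NormedSpace.exp (s • etrunc H' M) * B * NormedSpace.exp (-(s • etrunc H' M))‖ ≤
        2 * ‖B‖ + ‖B‖ / (1 - ‖s‖ / S) := by
  intro s hs
  have hsymm : (↑H' : V →ₗ[ℂ] V).IsSymmetric :=
    ContinuousLinearMap.isSelfAdjoint_iff_isSymmetric.mp hH'
  set n := finrank ℂ V with hn
  have hdim : finrank ℂ V = n := rfl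
  set b := hsymm.eigenvectorBasis hdim with hbdef
  set μ : Fin n → ℝ := hsymm.eigenvalues hdim with hμdef
  have hb : ∀ i, H' (b i) = (μ i : ℂ) • b i := fun i => hsymm.apply_eigenvectorBasis hdim i
  have hμM : ∀ i, -M < μ i := fun i => hM (μ i) (hsymm.hasEigenvalue_eigenvalues hdim i)
  set f : Fin n → ℝ := fun i => min (μ i) M with hf
  have hfle : ∀ i, f i ≤ μ i := fun i => min_le_left _ _
  have hfM : ∀ i, f i ≤ M := fun i => min_le_right _ _
  set P := specProj H' (Set.Ioo (-M) M) with hPdef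
  set Q := specProj H' (Set.Ici M) with hQdef
  have hPd : ∀ i, P (b i) = (if μ i < M then (1 : ℂ) else 0) • b i := by
    intro i
    rw [hPdef, specProj_apply_eigenvector H' hsymm _ (μ i) (b i) (hb i)]
    rcases lt_or_ge (μ i) M with h | h
    · simp [Set.mem_Ioo, hμM i, h]
    · simp [Set.mem_Ioo, not_lt.mpr h]
  have hQd : ∀ i, Q (b i) = (if μ i < M then (0 : ℂ) else 1) • b i := by
    intro i
    rw [hQdef, specProj_apply_eigenvector H' hsymm _ (μ i) (b i) (hb i)]
    rcases lt_or_ge (μ i) M with h | h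
    · simp [Set.mem_Ici, not_le.mpr h, h]
    · simp [Set.mem_Ici, h, not_lt.mpr h]
  have hEt : ∀ i, etrunc H' M (b i) = ((f i : ℝ) : ℂ) • b i := by
    intro i
    rw [etrunc]
    rw [ContinuousLinearMap.add_apply, ContinuousLinearMap.mul_apply,
      ContinuousLinearMap.smul_apply, hPd i, hQd i]
    rcases lt_or_ge (μ i) M with h | h
    · simp [h, hb i, hf, min_eq_left h.le, inf_eq_left.mpr h.le]
    · simp [not_lt.mpr h, hf, min_eq_right h, inf_eq_right.mpr h]
  have hexp : ∀ (A : V →L[ℂ] V) (c : Fin n → ℝ), (∀ i, A (b i) = (c i : ℂ) • b i) →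
      ∀ (t : ℂ) (i : Fin n),
        NormedSpace.exp (t • A) (b i) = Complex.exp (t * c i) • b i := by
    intro A c hA t i
    apply exp_apply_eigenvector
    rw [ContinuousLinearMap.smul_apply, hA, smul_smul]
  set E := NormedSpace.exp (s • H') with hEdef
  set E' := NormedSpace.exp (-(s • H')) with hE'def
  set F := NormedSpace.exp (s • etrunc H' M) with hFdef
  set F' := NormedSpace.exp (-(s • etrunc H' M)) with hF'def
  have hEd : ∀ i, E (b i) = Complex.exp (s * μ i) • b i := fun i => hexp H' μ hb s i
  have hE'd : ∀ i, E' (b i) = Complex.exp (-s * μ i) • b i := by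
    intro i
    have := hexp H' μ hb (-s) i
    rwa [neg_smul] at this
  have hFd : ∀ i, F (b i) = Complex.exp (s * f i) • b i := fun i => hexp _ f hEt s i
  have hF'd : ∀ i, F' (b i) = Complex.exp (-s * f i) • b i := by
    intro i
    have := hexp _ f hEt (-s) i
    rwa [neg_smul] at this
  have ext_diag : ∀ (T T' : V →L[ℂ] V), (∀ i, T (b i) = T' (b i)) → T = T' := by
    intro T T' h
    apply ContinuousLinearMap.coe_injective
    apply b.toBasis.ext
    intro i
    simpa [OrthonormalBasis.coe_toBasis] using h i
  have hE'E : E' * E = 1 := by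
    letI : NormedAlgebra ℚ (V →L[ℂ] V) := NormedAlgebra.restrictScalars ℚ ℂ (V →L[ℂ] V)
    rw [hE'def, hEdef, ← NormedSpace.exp_add_of_commute ((Commute.refl (s • H')).neg_left),
      neg_add_cancel, NormedSpace.exp_zero]
  have hu : 0 < 1 - ‖s‖ / S := by
    have : ‖s‖ / S < 1 := (div_lt_one hS).mpr hs
    linarith
  have hBnn : (0 : ℝ) ≤ ‖B‖ := norm_nonneg B
  have hHadb := hHad s hs
  have hcoeff : ∀ r : ℝ, s.re * r ≤ 0 → ‖Complex.exp (s * r)‖ ≤ 1 := by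
    intro r hr
    rw [Complex.norm_exp, Real.exp_le_one_iff]
    simpa [Complex.mul_re] using hr
  have prod_le : ∀ (X Y Z : V →L[ℂ] V) (a c : ℝ), 0 ≤ a → 0 ≤ c → ‖X‖ ≤ a → ‖Z‖ ≤ c →
      ‖X * Y * Z‖ ≤ a * ‖Y‖ * c := by
    intro X Y Z a c ha hc hX hZ
    calc ‖X * Y * Z‖ ≤ ‖X * Y‖ * ‖Z‖ := norm_mul_le _ _
      _ ≤ ‖X‖ * ‖Y‖ * ‖Z‖ :=
          mul_le_mul_of_nonneg_right (norm_mul_le _ _) (norm_nonneg _)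
      _ ≤ a * ‖Y‖ * c := by
          have h1 : ‖X‖ * ‖Y‖ ≤ a * ‖Y‖ :=
            mul_le_mul_of_nonneg_right hX (norm_nonneg _)
          have h2 : ‖X‖ * ‖Y‖ * ‖Z‖ ≤ a * ‖Y‖ * ‖Z‖ :=
            mul_le_mul_of_nonneg_right h1 (norm_nonneg _)
          exact h2.trans (mul_le_mul_of_nonneg_left hZ (by positivity))
  have hPn : ‖P‖ ≤ 1 := by
    apply diag_norm_le b P _ hPd 1 zero_le_one
    intro i; rcases lt_or_ge (μ i) M with h | h <;> simp [h, not_lt.mpr]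
  have hQn : ‖Q‖ ≤ 1 := by
    apply diag_norm_le b Q _ hQd 1 zero_le_one
    intro i; rcases lt_or_ge (μ i) M with h | h <;> simp [h, not_lt.mpr]
  rcases le_or_gt 0 s.re with hre | hre
  · -- Re s ≥ 0
    have hid : F' = E' * P + Complex.exp (-s * M) • Q := by
      apply ext_diag
      intro i
      rw [hF'd i, ContinuousLinearMap.add_apply, ContinuousLinearMap.mul_apply,
        ContinuousLinearMap.smul_apply, hPd i, hQd i]
      rcases lt_or_ge (μ i) M with h | h
      · simp [h, hE'd i, hf, min_eq_left h.le, inf_eq_left.mpr h.le]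
      · simp [not_lt.mpr h, hf, min_eq_right h, inf_eq_right.mpr h]
    have key : F * B * F' = (F * E') * (E * B * E') * P +
        (Complex.exp (-s * M) • F) * B * Q := by
      rw [hid, mul_add]
      congr 1
      · simp only [mul_assoc]
        rw [← mul_assoc E' E, hE'E, one_mul]
      · simp only [smul_mul_assoc, mul_smul_comm]
    have hFE' : ‖F * E'‖ ≤ 1 := by
      apply diag_norm_le b _ (fun i => Complex.exp (s * ((f i - μ i : ℝ) : ℂ))) _ 1 zero_le_one
      · intro i
        apply hcoeff
        exact mul_nonpos_of_nonneg_of_nonpos hre (by linarith [hfle i])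
      · intro i
        rw [ContinuousLinearMap.mul_apply, hE'd i, map_smul, hFd i, smul_smul,
          ← Complex.exp_add]
        congr 2
        push_cast
        ring
    have hcF : ‖Complex.exp (-s * M) • F‖ ≤ 1 := by
      apply diag_norm_le b _ (fun i => Complex.exp (s * ((f i - M : ℝ) : ℂ))) _ 1 zero_le_one
      · intro i
        apply hcoeff
        exact mul_nonpos_of_nonneg_of_nonpos hre (by linarith [hfM i])
      · intro i
        rw [ContinuousLinearMap.smul_apply, hFd i, smul_smul, ← Complex.exp_add]
        congr 2
        push_cast
        ring
    calc ‖F * B * F'‖ = ‖(F * E') * (E * B * E') * P +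
          (Complex.exp (-s * M) • F) * B * Q‖ := by rw [key]
      _ ≤ ‖(F * E') * (E * B * E') * P‖ + ‖(Complex.exp (-s * M) • F) * B * Q‖ :=
          norm_add_le _ _
      _ ≤ 1 * ‖E * B * E'‖ * 1 + 1 * ‖B‖ * 1 :=
          add_le_add (prod_le _ _ _ 1 1 zero_le_one zero_le_one hFE' hPn)
            (prod_le _ _ _ 1 1 zero_le_one zero_le_one hcF hQn)
      _ = ‖E * B * E'‖ + ‖B‖ := by ring
      _ ≤ ‖B‖ / (1 - ‖s‖ / S) + ‖B‖ := add_le_add_left hHadb _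
      _ ≤ 2 * ‖B‖ + ‖B‖ / (1 - ‖s‖ / S) := by linarith
  · -- Re s < 0
    have hid : F = P * E + Complex.exp (s * M) • Q := by
      apply ext_diag
      intro i
      rw [hFd i, ContinuousLinearMap.add_apply, ContinuousLinearMap.mul_apply,
        ContinuousLinearMap.smul_apply, hEd i, hQd i, map_smul, hPd i]
      rcases lt_or_ge (μ i) M with h | h
      · simp [h, hf, min_eq_left h.le, inf_eq_left.mpr h.le]
      · simp [not_lt.mpr h, hf, min_eq_right h, inf_eq_right.mpr h]
    have key : F * B * F' = P * (E * B * E') * (E * F') +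
        Q * B * (Complex.exp (s * M) • F') := by
      rw [hid, add_mul, add_mul]
      congr 1
      · simp only [mul_assoc]
        rw [← mul_assoc E' E, hE'E, one_mul]
      · simp only [smul_mul_assoc, mul_smul_comm]
    have hEF' : ‖E * F'‖ ≤ 1 := by
      apply diag_norm_le b _ (fun i => Complex.exp (s * ((μ i - f i : ℝ) : ℂ))) _ 1 zero_le_one
      · intro i
        apply hcoeff
        exact mul_nonpos_of_nonpos_of_nonneg hre.le (by linarith [hfle i])
      · intro i
        rw [ContinuousLinearMap.mul_apply, hF'd i, map_smul, hEd i, smul_smul,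
          ← Complex.exp_add]
        congr 2
        push_cast
        ring
    have hcF' : ‖Complex.exp (s * M) • F'‖ ≤ 1 := by
      apply diag_norm_le b _ (fun i => Complex.exp (s * ((M - f i : ℝ) : ℂ))) _ 1 zero_le_one
      · intro i
        apply hcoeff
        exact mul_nonpos_of_nonpos_of_nonneg hre.le (by linarith [hfM i])
      · intro i
        rw [ContinuousLinearMap.smul_apply, hF'd i, smul_smul, ← Complex.exp_add]
        congr 2
        push_cast
        ring
    calc ‖F * B * F'‖ = ‖P * (E * B * E') * (E * F') +
          Q * B * (Complex.exp (s * M) • F')‖ := by rw [key]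
      _ ≤ ‖P * (E * B * E') * (E * F')‖ + ‖Q * B * (Complex.exp (s * M) • F')‖ :=
          norm_add_le _ _
      _ ≤ 1 * ‖E * B * E'‖ * 1 + 1 * ‖B‖ * 1 :=
          add_le_add (prod_le _ _ _ 1 1 zero_le_one zero_le_one hPn hEF')
            (prod_le _ _ _ 1 1 zero_le_one zero_le_one hQn hcF')
      _ = ‖E * B * E'‖ + ‖B‖ := by ring
      _ ≤ ‖B‖ / (1 - ‖s‖ / S) + ‖B‖ := add_le_add_left hHadb _
      _ ≤ 2 * ‖B‖ + ‖B‖ / (1 - ‖s‖ / S) := by linarith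
end

section
/- Let V be a finite-dimensional complex inner product space, let H' and B be self-adjoint linear endomorphisms of V, let M ∈ ℝ be such that every eigenvalue of H' is strictly greater than −M, and let S > 0. Define H̄' := H'·E^{H'}((−M,M)) + M·E^{H'}([M,∞)) and H̄ := H̄' + B. Assume that for every s ∈ ℂ with |s| < S, ‖e^{sH'}·B·e^{−sH'}‖ ≤ ‖B‖/(1 − |s|/S). Then for every s ∈ ℂ with |s| < S and every linear endomorphism A of V, ‖e^{sH̄}·e^{−sH̄'}·A·e^{sH̄'}·e^{−sH̄}‖ ≤ exp( 2|s|·( 2‖B‖ + ‖B‖/(1 − |s|/S) ) )·‖A‖. -/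
set_option linter.unusedSectionVars false
set_option linter.unusedVariables false
set_option maxHeartbeats 1000000
set_option synthInstance.maxHeartbeats 400000

open NormedSpace

noncomputable instance Stmt8Aux.instNormedAlgebraRatCLM {V : Type*} [NormedAddCommGroup V]
    [InnerProductSpace ℂ V] : NormedAlgebra ℚ (V →L[ℂ] V) :=
  NormedAlgebra.restrictScalars ℚ ℂ _

namespace Stmt8Aux

variable {V : Type*} [NormedAddCommGroup V] [InnerProductSpace ℂ V] [FiniteDimensional ℂ V]

local notation "⟪" x ", " y "⟫" => @inner ℂ _ _ x y

variable {n : ℕ} (b : OrthonormalBasis (Fin n) ℂ V)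

noncomputable def diagOp (d : Fin n → ℂ) : V →L[ℂ] V :=
  ∑ i, d i • (innerSL ℂ (b i)).smulRight (b i)

lemma diagOp_apply (d : Fin n → ℂ) (x : V) :
    diagOp b d x = ∑ i, (d i * ⟪b i, x⟫) • b i := by
  simp [diagOp, mul_comm, smul_smul]

lemma diagOp_apply_basis (d : Fin n → ℂ) (j : Fin n) :
    diagOp b d (b j) = d j • b j := by
  rw [diagOp_apply, Finset.sum_eq_single j]
  · simp [orthonormal_iff_ite.mp b.orthonormal]
  · intro i _ hij
    simp [orthonormal_iff_ite.mp b.orthonormal, hij]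
  · simp

lemma ext_of_basis {T T' : V →L[ℂ] V} (h : ∀ i, T (b i) = T' (b i)) : T = T' := by
  ext x
  conv_lhs => rw [← b.sum_repr x]
  conv_rhs => rw [← b.sum_repr x]
  simp only [map_sum, map_smul, h]

lemma diagOp_one : diagOp b 1 = 1 := by
  refine ext_of_basis b fun j => ?_
  simp [diagOp_apply_basis]

lemma diagOp_mul (d e : Fin n → ℂ) : diagOp b d * diagOp b e = diagOp b (d * e) := by
  refine ext_of_basis b fun j => ?_
  simp [diagOp_apply_basis, ContinuousLinearMap.mul_apply, smul_smul, mul_comm]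

lemma diagOp_smul (c : ℂ) (d : Fin n → ℂ) : c • diagOp b d = diagOp b (c • d) := by
  refine ext_of_basis b fun j => ?_
  simp [diagOp_apply_basis, smul_smul]

lemma diagOp_add (d e : Fin n → ℂ) : diagOp b d + diagOp b e = diagOp b (d + e) := by
  refine ext_of_basis b fun j => ?_
  simp [diagOp_apply_basis, add_smul]

/-- `diagOp` as an algebra homomorphism. -/
noncomputable def diagA : (Fin n → ℂ) →ₐ[ℂ] (V →L[ℂ] V) where
  toFun := diagOp b
  map_one' := diagOp_one b
  map_mul' d e := (diagOp_mul b d e).symm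
  map_zero' := by
    refine ext_of_basis b fun j => ?_
    simp [diagOp_apply_basis]
  map_add' d e := (diagOp_add b d e).symm
  commutes' c := by
    refine ext_of_basis b fun j => ?_
    simp [diagOp_apply_basis, Algebra.algebraMap_eq_smul_one]

lemma exp_diagOp (d : Fin n → ℂ) :
    exp (diagOp b d) = diagOp b fun i => Complex.exp (d i) := by
  have hc : Continuous (diagA b) := by
    exact (diagA b).toLinearMap.continuous_of_finiteDimensional
  have h := map_exp (diagA b) hc d
  have : (diagA b) d = diagOp b d := rfl
  rw [this] at h
  rw [← h]
  have : exp d = fun i => Complex.exp (d i) := by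
    rw [Pi.exp_def]
    funext i
    rw [Complex.exp_eq_exp_ℂ]
  rw [this]
  rfl

lemma norm_diagOp_le (d : Fin n → ℂ) (c : ℝ) (hc : 0 ≤ c) (h : ∀ i, ‖d i‖ ≤ c) :
    ‖diagOp b d‖ ≤ c := by
  refine ContinuousLinearMap.opNorm_le_bound _ hc fun x => ?_
  have hrepr : ∀ i, b.repr (diagOp b d x) i = d i * b.repr x i := by
    intro i
    rw [b.repr_apply_apply, b.repr_apply_apply, diagOp_apply, inner_sum,
      Finset.sum_eq_single i]
    · simp [inner_smul_right, orthonormal_iff_ite.mp b.orthonormal]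
    · intro j _ hij
      simp [inner_smul_right, orthonormal_iff_ite.mp b.orthonormal, hij.symm]
    · simp
  have h1 : ‖diagOp b d x‖ = ‖b.repr (diagOp b d x)‖ := (b.repr.norm_map _).symm
  have h2 : ‖x‖ = ‖b.repr x‖ := (b.repr.norm_map _).symm
  rw [h1, h2, EuclideanSpace.norm_eq, EuclideanSpace.norm_eq]
  rw [← Real.sqrt_sq hc, ← Real.sqrt_mul (by positivity)]
  apply Real.sqrt_le_sqrt
  rw [Finset.mul_sum]
  apply Finset.sum_le_sum
  intro i _
  rw [hrepr i, norm_mul]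
  have := h i
  have h0 : (0:ℝ) ≤ ‖b.repr x i‖ := norm_nonneg _
  have : ‖d i‖ * ‖b.repr x i‖ ≤ c * ‖b.repr x i‖ := mul_le_mul_of_nonneg_right (h i) h0
  calc (‖d i‖ * ‖b.repr x i‖) ^ 2 ≤ (c * ‖b.repr x i‖)^2 := by
        apply pow_le_pow_left₀ (by positivity) this
    _ = c ^ 2 * ‖b.repr x i‖ ^ 2 := by ring

end Stmt8Aux

namespace Stmt8Aux

section Spectral

variable {V : Type*} [NormedAddCommGroup V] [InnerProductSpace ℂ V] [FiniteDimensional ℂ V]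
variable {n : ℕ} (T : V →L[ℂ] V) (hT : LinearMap.IsSymmetric (T : V →ₗ[ℂ] V))
  (hn : Module.finrank ℂ V = n)

local notation "⟪" x ", " y "⟫" => @inner ℂ _ _ x y

open Classical in
lemma specProj_apply_basis (I : Set ℝ) (j : Fin n) :
    specProj T I (hT.eigenvectorBasis hn j) =
      if hT.eigenvalues hn j ∈ I then hT.eigenvectorBasis hn j else 0 := by
  set b := hT.eigenvectorBasis hn
  set μ := hT.eigenvalues hn
  set W := ⨆ μ' ∈ I, Module.End.eigenspace (T : V →ₗ[ℂ] V) (μ' : ℂ) with hW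
  have hmemj : b j ∈ Module.End.eigenspace (T : V →ₗ[ℂ] V) ((μ j : ℂ)) :=
    (hT.hasEigenvector_eigenvectorBasis hn j).1
  by_cases hj : μ j ∈ I
  · rw [if_pos hj]
    have : b j ∈ W := by
      refine Submodule.mem_iSup_of_mem (μ j) ?_
      exact Submodule.mem_iSup_of_mem hj hmemj
    exact congrArg Subtype.val (Submodule.orthogonalProjectionOnto_mem_subspace_eq_self ⟨b j, this⟩)
  · rw [if_neg hj]
    have horth : b j ∈ Wᗮ := by
      have hle : W ≤ (ℂ ∙ (b j))ᗮ := by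
        refine iSup₂_le fun μ' hμ' => ?_
        intro v hv
        rw [Submodule.mem_orthogonal]
        intro u hu
        obtain ⟨c, rfl⟩ := Submodule.mem_span_singleton.mp hu
        rw [inner_smul_left]
        have hne : ((μ j : ℂ)) ≠ ((μ' : ℂ)) := by
          intro hcon
          exact hj (by rwa [Complex.ofReal_inj.mp hcon])
        have := hT.orthogonalFamily_eigenspaces hne ⟨b j, hmemj⟩ ⟨v, hv⟩
        simp only [Submodule.coe_subtypeₗᵢ, Submodule.coe_subtype] at this ⊢
        rw [this, mul_zero]
      have := Submodule.orthogonal_le hle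
      exact this (Submodule.le_orthogonal_orthogonal _ (Submodule.mem_span_singleton_self _))
    have := Submodule.orthogonalProjectionOnto_apply_of_mem_orthogonal horth
    simp only [specProj]
    rw [ContinuousLinearMap.comp_apply]
    rw [this]
    simp


open Classical in
lemma etrunc_eq_diagOp (M : ℝ)
    (hM : ∀ μ : ℝ, Module.End.HasEigenvalue (↑T : V →ₗ[ℂ] V) (μ : ℂ) → -M < μ) :
    etrunc T M = diagOp (hT.eigenvectorBasis hn)
      (fun i => ((min (hT.eigenvalues hn i) M : ℝ) : ℂ)) := by
  refine ext_of_basis (hT.eigenvectorBasis hn) fun j => ?_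
  set b := hT.eigenvectorBasis hn with hb
  set μ := hT.eigenvalues hn with hμ
  have hMj : -M < μ j := hM _ (hT.hasEigenvalue_eigenvalues hn j)
  rw [diagOp_apply_basis]
  simp only [etrunc, ContinuousLinearMap.add_apply, ContinuousLinearMap.mul_apply,
    ContinuousLinearMap.smul_apply]
  rw [specProj_apply_basis T hT hn, specProj_apply_basis T hT hn]
  by_cases h : μ j < M
  · rw [if_pos (Set.mem_Ioo.mpr ⟨hMj, h⟩), if_neg (fun hm => absurd (Set.mem_Ici.mp hm) (not_le.mpr h)),
      smul_zero, add_zero, min_eq_left h.le]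
    exact hT.apply_eigenvectorBasis hn j
  · rw [if_neg (fun hm => h (Set.mem_Ioo.mp hm).2), if_pos (Set.mem_Ici.mpr (not_lt.mp h)),
      map_zero, zero_add, min_eq_right (not_lt.mp h)]

lemma self_eq_diagOp :
    T = diagOp (hT.eigenvectorBasis hn) (fun i => ((hT.eigenvalues hn i : ℝ) : ℂ)) := by
  refine ext_of_basis (hT.eigenvectorBasis hn) fun j => ?_
  rw [diagOp_apply_basis]
  exact hT.apply_eigenvectorBasis hn j

end Spectral


end Stmt8Aux

namespace Stmt8Aux

section Conj

variable {V : Type*} [NormedAddCommGroup V] [InnerProductSpace ℂ V] [FiniteDimensional ℂ V]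
variable {n : ℕ} (b : OrthonormalBasis (Fin n) ℂ V)

lemma abs_exp_mul_ofReal (w : ℂ) (x : ℝ) :
    ‖Complex.exp (w * (x : ℂ))‖ = Real.exp (w.re * x) := by
  rw [Complex.norm_exp]
  congr 1
  simp [Complex.mul_re]

lemma norm_mul3_le (x y z : V →L[ℂ] V) : ‖x * y * z‖ ≤ ‖x‖ * ‖y‖ * ‖z‖ :=
  (norm_mul_le _ _).trans (mul_le_mul_of_nonneg_right (norm_mul_le _ _) (norm_nonneg _))

lemma exp_smul_diagOp (c : ℂ) (d : Fin n → ℂ) :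
    exp (c • diagOp b d) = diagOp b fun i => Complex.exp (c * d i) := by
  have h : c • diagOp b d = diagOp b fun i => c * d i := by
    rw [diagOp_smul]; exact congrArg _ rfl
  rw [h, exp_diagOp]

lemma exp_neg_smul_diagOp (c : ℂ) (d : Fin n → ℂ) :
    exp (-(c • diagOp b d)) = diagOp b fun i => Complex.exp (-(c * d i)) := by
  rw [← neg_smul, exp_smul_diagOp]
  congr 1; funext i; rw [neg_mul]

lemma conj_bound_gen (B : V →L[ℂ] V) (μR ν : Fin n → ℝ) (M S : ℝ) (hS : 0 < S)
    (hν1 : ∀ i, μR i < M → ν i = μR i) (hν2 : ∀ i, ¬ μR i < M → ν i = M)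
    (hHad : ∀ w : ℂ, ‖w‖ < S →
      ‖exp (w • diagOp b fun i => ((μR i : ℝ) : ℂ)) * B *
        exp (-(w • diagOp b fun i => ((μR i : ℝ) : ℂ)))‖ ≤ ‖B‖ / (1 - ‖w‖ / S))
    (w : ℂ) (hw : ‖w‖ < S) :
    ‖exp (w • diagOp b fun i => ((ν i : ℝ) : ℂ)) * B *
        exp (-(w • diagOp b fun i => ((ν i : ℝ) : ℂ)))‖ ≤
      2 * ‖B‖ + ‖B‖ / (1 - ‖w‖ / S) := by
  classical
  have hν3 : ∀ i, ν i ≤ μR i := by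
    intro i
    by_cases h : μR i < M
    · rw [hν1 i h]
    · rw [hν2 i h]; exact not_lt.mp h
  have hν4 : ∀ i, ν i ≤ M := by
    intro i
    by_cases h : μR i < M
    · rw [hν1 i h]; exact h.le
    · rw [hν2 i h]
  rw [exp_smul_diagOp, exp_neg_smul_diagOp]
  set G := (diagOp b fun i => Complex.exp (w * (μR i : ℂ))) * B *
      (diagOp b fun i => Complex.exp (-(w * (μR i : ℂ)))) with hGdef
  have hG : ‖G‖ ≤ ‖B‖ / (1 - ‖w‖ / S) := by
    have := hHad w hw
    rwa [exp_smul_diagOp, exp_neg_smul_diagOp] at this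
  have hSw : 0 < 1 - ‖w‖ / S := by
    have : ‖w‖ / S < 1 := (div_lt_one hS).mpr hw
    linarith
  have hBnn : (0:ℝ) ≤ ‖B‖ := norm_nonneg _
  have hGnn : (0:ℝ) ≤ ‖B‖ / (1 - ‖w‖ / S) := by positivity
  set p : Fin n → ℂ := fun i => if μR i < M then 1 else 0 with hp
  set q : Fin n → ℂ := fun i => if μR i < M then 0 else 1 with hq
  have hpnorm : ‖diagOp b p‖ ≤ 1 := by
    refine norm_diagOp_le b _ 1 one_pos.le fun i => ?_
    by_cases h : μR i < M <;> simp [hp, h]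
  have hqnorm : ‖diagOp b q‖ ≤ 1 := by
    refine norm_diagOp_le b _ 1 one_pos.le fun i => ?_
    by_cases h : μR i < M <;> simp [hq, h]
  rcases le_or_gt 0 w.re with hre | hre
  · -- Re w ≥ 0 : split the right-hand exponential
    have hsplit : (diagOp b fun i => Complex.exp (-(w * (ν i : ℂ)))) =
        (diagOp b fun i => Complex.exp (-(w * (μR i : ℂ)))) * diagOp b p
          + Complex.exp (-(w * (M : ℂ))) • diagOp b q := by
      rw [diagOp_mul, diagOp_smul, diagOp_add]
      congr 1; funext i
      by_cases h : μR i < M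
      · simp [Pi.mul_apply, Pi.add_apply, Pi.smul_apply, hp, hq, h, hν1 i h]
      · simp [Pi.mul_apply, Pi.add_apply, Pi.smul_apply, hp, hq, h, hν2 i h]
    have hEfac : (diagOp b fun i => Complex.exp (w * (ν i : ℂ))) =
        (diagOp b fun i => Complex.exp (w * ((ν i - μR i : ℝ) : ℂ))) *
          (diagOp b fun i => Complex.exp (w * (μR i : ℂ))) := by
      rw [diagOp_mul]
      congr 1; funext i
      rw [Pi.mul_apply, ← Complex.exp_add]
      congr 1; push_cast; ring
    have hf2 : Complex.exp (-(w * (M:ℂ))) • (diagOp b fun i => Complex.exp (w * (ν i : ℂ))) =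
        diagOp b fun i => Complex.exp (w * ((ν i - M : ℝ) : ℂ)) := by
      rw [diagOp_smul]
      congr 1; funext i
      rw [Pi.smul_apply, smul_eq_mul, ← Complex.exp_add]
      congr 1; push_cast; ring
    have hid : (diagOp b fun i => Complex.exp (w * (ν i : ℂ))) * B *
        (diagOp b fun i => Complex.exp (-(w * (ν i : ℂ)))) =
        (diagOp b fun i => Complex.exp (w * ((ν i - μR i : ℝ) : ℂ))) * G * diagOp b p
          + (diagOp b fun i => Complex.exp (w * ((ν i - M : ℝ) : ℂ))) * B * diagOp b q := by
      rw [hsplit, mul_add]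
      congr 1
      · rw [hGdef, hEfac]
        simp only [mul_assoc]
      · rw [mul_smul_comm, ← smul_mul_assoc, ← smul_mul_assoc, hf2]
    rw [hid]
    have n1 : ‖diagOp b fun i => Complex.exp (w * ((ν i - μR i : ℝ) : ℂ))‖ ≤ 1 := by
      refine norm_diagOp_le b _ 1 one_pos.le fun i => ?_
      rw [abs_exp_mul_ofReal, Real.exp_le_one_iff]
      exact mul_nonpos_of_nonneg_of_nonpos hre (sub_nonpos.mpr (hν3 i))
    have n2 : ‖diagOp b fun i => Complex.exp (w * ((ν i - M : ℝ) : ℂ))‖ ≤ 1 := by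
      refine norm_diagOp_le b _ 1 one_pos.le fun i => ?_
      rw [abs_exp_mul_ofReal, Real.exp_le_one_iff]
      exact mul_nonpos_of_nonneg_of_nonpos hre (sub_nonpos.mpr (hν4 i))
    refine le_trans (norm_add_le _ _) ?_
    refine le_trans (add_le_add (norm_mul3_le _ _ _) (norm_mul3_le _ _ _)) ?_
    have b1 : ‖diagOp b fun i => Complex.exp (w * ((ν i - μR i : ℝ) : ℂ))‖ * ‖G‖ * ‖diagOp b p‖
        ≤ 1 * (‖B‖ / (1 - ‖w‖ / S)) * 1 := by
      apply mul_le_mul (mul_le_mul n1 hG (norm_nonneg _) one_pos.le) hpnorm (norm_nonneg _)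
      positivity
    have b2 : ‖diagOp b fun i => Complex.exp (w * ((ν i - M : ℝ) : ℂ))‖ * ‖B‖ * ‖diagOp b q‖
        ≤ 1 * ‖B‖ * 1 := by
      apply mul_le_mul (mul_le_mul n2 le_rfl hBnn one_pos.le) hqnorm (norm_nonneg _)
      positivity
    linarith
  · -- Re w ≤ 0 : split the left-hand exponential
    have hre' : w.re ≤ 0 := hre.le
    have hsplit : (diagOp b fun i => Complex.exp (w * (ν i : ℂ))) =
        diagOp b p * (diagOp b fun i => Complex.exp (w * (μR i : ℂ)))
          + Complex.exp (w * (M:ℂ)) • diagOp b q := by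
      rw [diagOp_mul, diagOp_smul, diagOp_add]
      congr 1; funext i
      by_cases h : μR i < M
      · simp [Pi.mul_apply, Pi.add_apply, Pi.smul_apply, hp, hq, h, hν1 i h]
      · simp [Pi.mul_apply, Pi.add_apply, Pi.smul_apply, hp, hq, h, hν2 i h]
    have hEfac : (diagOp b fun i => Complex.exp (-(w * (ν i : ℂ)))) =
        (diagOp b fun i => Complex.exp (-(w * (μR i : ℂ)))) *
          (diagOp b fun i => Complex.exp (w * ((μR i - ν i : ℝ) : ℂ))) := by
      rw [diagOp_mul]
      congr 1; funext i
      rw [Pi.mul_apply, ← Complex.exp_add]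
      congr 1; push_cast; ring
    have hf2 : Complex.exp (w * (M:ℂ)) • (diagOp b fun i => Complex.exp (-(w * (ν i : ℂ)))) =
        diagOp b fun i => Complex.exp (w * ((M - ν i : ℝ) : ℂ)) := by
      rw [diagOp_smul]
      congr 1; funext i
      rw [Pi.smul_apply, smul_eq_mul, ← Complex.exp_add]
      congr 1; push_cast; ring
    have hid : (diagOp b fun i => Complex.exp (w * (ν i : ℂ))) * B *
        (diagOp b fun i => Complex.exp (-(w * (ν i : ℂ)))) =
        diagOp b p * G * (diagOp b fun i => Complex.exp (w * ((μR i - ν i : ℝ) : ℂ)))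
          + diagOp b q * B * (diagOp b fun i => Complex.exp (w * ((M - ν i : ℝ) : ℂ))) := by
      rw [hsplit, add_mul, add_mul]
      congr 1
      · rw [hGdef, hEfac]
        simp only [mul_assoc]
      · rw [smul_mul_assoc, smul_mul_assoc, ← mul_smul_comm, hf2]
    rw [hid]
    have n1 : ‖diagOp b fun i => Complex.exp (w * ((μR i - ν i : ℝ) : ℂ))‖ ≤ 1 := by
      refine norm_diagOp_le b _ 1 one_pos.le fun i => ?_
      rw [abs_exp_mul_ofReal, Real.exp_le_one_iff]
      exact mul_nonpos_of_nonpos_of_nonneg hre' (sub_nonneg.mpr (hν3 i))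
    have n2 : ‖diagOp b fun i => Complex.exp (w * ((M - ν i : ℝ) : ℂ))‖ ≤ 1 := by
      refine norm_diagOp_le b _ 1 one_pos.le fun i => ?_
      rw [abs_exp_mul_ofReal, Real.exp_le_one_iff]
      exact mul_nonpos_of_nonpos_of_nonneg hre' (sub_nonneg.mpr (hν4 i))
    refine le_trans (norm_add_le _ _) ?_
    refine le_trans (add_le_add (norm_mul3_le _ _ _) (norm_mul3_le _ _ _)) ?_
    have b1 : ‖diagOp b p‖ * ‖G‖ * ‖diagOp b fun i => Complex.exp (w * ((μR i - ν i : ℝ) : ℂ))‖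
        ≤ 1 * (‖B‖ / (1 - ‖w‖ / S)) * 1 := by
      apply mul_le_mul (mul_le_mul hpnorm hG (norm_nonneg _) one_pos.le) n1 (norm_nonneg _)
      positivity
    have b2 : ‖diagOp b q‖ * ‖B‖ * ‖diagOp b fun i => Complex.exp (w * ((M - ν i : ℝ) : ℂ))‖
        ≤ 1 * ‖B‖ * 1 := by
      apply mul_le_mul (mul_le_mul hqnorm le_rfl hBnn one_pos.le) n2 (norm_nonneg _)
      positivity
    linarith

end Conj

end Stmt8Aux
namespace Stmt8Aux

variable {V : Type*} [NormedAddCommGroup V] [InnerProductSpace ℂ V] [FiniteDimensional ℂ V]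

lemma hasDerivAt_exp_real (X : V →L[ℂ] V) (t : ℝ) :
    HasDerivAt (fun u : ℝ => exp (u • X)) (X * exp (t • X)) t := by
  have h := hasDerivAt_exp_smul_const' (𝕂 := ℝ) X t
  exact h

lemma exp_mul_exp_neg (X : V →L[ℂ] V) : exp X * exp (-X) = 1 := by
  rw [← exp_add_of_commute (Commute.neg_right (Commute.refl X)), add_neg_cancel, exp_zero]

lemma exp_neg_mul_exp (X : V →L[ℂ] V) : exp (-X) * exp X = 1 := by
  rw [← exp_add_of_commute (Commute.neg_left (Commute.refl X)), neg_add_cancel, exp_zero]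

/-- Grönwall bound, version A: conjugation expressed via `Y`. -/
lemma gronwall_A [Nontrivial V] (X Y : V →L[ℂ] V) (c : ℝ)
    (hb : ∀ t : ℝ, t ∈ Set.Icc (0:ℝ) 1 →
      ‖exp (-(t • Y)) * (X + Y) * exp (t • Y)‖ ≤ c) :
    ‖exp X * exp Y‖ ≤ Real.exp c := by
  set f : ℝ → (V →L[ℂ] V) := fun t => exp (t • X) * exp (t • Y) with hf
  set f' : ℝ → (V →L[ℂ] V) :=
    fun t => f t * (exp (-(t • Y)) * (X + Y) * exp (t • Y)) with hf'
  have hX : ∀ t : ℝ, Commute X (exp (t • X)) :=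
    fun t => ((Commute.refl X).smul_right t).exp_right
  have hderiv : ∀ t : ℝ, HasDerivAt f (f' t) t := by
    intro t
    have h1 := hasDerivAt_exp_real X t
    have h2 := hasDerivAt_exp_real Y t
    have h := h1.mul h2
    refine HasDerivAt.congr_deriv h ?_
    symm
    rw [hf']
    simp only [hf]
    -- goal : exp (t•X) * exp (t•Y) * (exp (-(t•Y)) * (X+Y) * exp (t•Y))
    --      = X * exp (t•X) * exp (t•Y) + exp (t•X) * (Y * exp (t•Y))
    have key : exp (t • X) * exp (t • Y) * (exp (-(t • Y)) * (X + Y) * exp (t • Y)) =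
        exp (t • X) * (X + Y) * exp (t • Y) := by
      have : exp (t • Y) * (exp (-(t • Y)) * (X + Y) * exp (t • Y)) =
          (X + Y) * exp (t • Y) := by
        rw [← mul_assoc, ← mul_assoc, exp_mul_exp_neg, one_mul]
      rw [mul_assoc, this, ← mul_assoc]
    rw [key, mul_add, add_mul, (hX t).eq]
    simp only [mul_assoc]
  have hcont : ContinuousOn f (Set.Icc 0 1) :=
    fun x _ => (hderiv x).continuousAt.continuousWithinAt
  have h0 : ‖f 0‖ ≤ 1 := by
    simp [hf, zero_smul, exp_zero]
  have hbnd : ∀ t ∈ Set.Ico (0:ℝ) 1, ‖f' t‖ ≤ c * ‖f t‖ + 0 := by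
    intro t ht
    rw [add_zero, hf']
    calc ‖f t * (exp (-(t • Y)) * (X + Y) * exp (t • Y))‖
        ≤ ‖f t‖ * ‖exp (-(t • Y)) * (X + Y) * exp (t • Y)‖ := norm_mul_le _ _
      _ ≤ ‖f t‖ * c := by
          apply mul_le_mul_of_nonneg_left (hb t ⟨ht.1, ht.2.le⟩) (norm_nonneg _)
      _ = c * ‖f t‖ := mul_comm _ _
  have := norm_le_gronwallBound_of_norm_deriv_right_le hcont
    (fun t ht => (hderiv t).hasDerivWithinAt) h0 hbnd 1 ⟨zero_le_one, le_rfl⟩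
  rw [gronwallBound_ε0] at this
  simpa [hf, one_smul] using this

/-- Grönwall bound, version B: conjugation expressed via `X`. -/
lemma gronwall_B [Nontrivial V] (X Y : V →L[ℂ] V) (c : ℝ)
    (hb : ∀ t : ℝ, t ∈ Set.Icc (0:ℝ) 1 →
      ‖exp (t • X) * (X + Y) * exp (-(t • X))‖ ≤ c) :
    ‖exp X * exp Y‖ ≤ Real.exp c := by
  set f : ℝ → (V →L[ℂ] V) := fun t => exp (t • X) * exp (t • Y) with hf
  set f' : ℝ → (V →L[ℂ] V) :=
    fun t => (exp (t • X) * (X + Y) * exp (-(t • X))) * f t with hf'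
  have hX : ∀ t : ℝ, Commute X (exp (t • X)) :=
    fun t => ((Commute.refl X).smul_right t).exp_right
  have hderiv : ∀ t : ℝ, HasDerivAt f (f' t) t := by
    intro t
    have h1 := hasDerivAt_exp_real X t
    have h2 := hasDerivAt_exp_real Y t
    have h := h1.mul h2
    refine HasDerivAt.congr_deriv h ?_
    symm
    rw [hf']
    simp only [hf]
    have key : (exp (t • X) * (X + Y) * exp (-(t • X))) *
        (exp (t • X) * exp (t • Y)) =
        exp (t • X) * (X + Y) * exp (t • Y) := by
      rw [mul_assoc (exp (t • X) * (X + Y)), ← mul_assoc (exp (-(t • X))),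
        exp_neg_mul_exp, one_mul]
    rw [key, mul_add, add_mul, (hX t).eq]
    simp only [mul_assoc]
  have hcont : ContinuousOn f (Set.Icc 0 1) :=
    fun x _ => (hderiv x).continuousAt.continuousWithinAt
  have h0 : ‖f 0‖ ≤ 1 := by
    simp [hf, zero_smul, exp_zero]
  have hbnd : ∀ t ∈ Set.Ico (0:ℝ) 1, ‖f' t‖ ≤ c * ‖f t‖ + 0 := by
    intro t ht
    rw [add_zero, hf']
    calc ‖(exp (t • X) * (X + Y) * exp (-(t • X))) * f t‖
        ≤ ‖exp (t • X) * (X + Y) * exp (-(t • X))‖ * ‖f t‖ := norm_mul_le _ _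
      _ ≤ c * ‖f t‖ := by
          apply mul_le_mul_of_nonneg_right (hb t ⟨ht.1, ht.2.le⟩) (norm_nonneg _)
  have := norm_le_gronwallBound_of_norm_deriv_right_le hcont
    (fun t ht => (hderiv t).hasDerivWithinAt) h0 hbnd 1 ⟨zero_le_one, le_rfl⟩
  rw [gronwallBound_ε0] at this
  simpa [hf, one_smul] using this

end Stmt8Aux

/-- Dyson-series bound for the truncated Hamiltonians `H̄' := etrunc H' M` and
`H̄ := H̄' + B`: for `|s| < S`,
`‖e^{sH̄} e^{−sH̄'} A e^{sH̄'} e^{−sH̄}‖ ≤ exp(2|s|(2‖B‖ + ‖B‖/(1−|s|/S)))·‖A‖`. -/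
theorem stmt_8 {V : Type*} [NormedAddCommGroup V] [InnerProductSpace ℂ V]
    [FiniteDimensional ℂ V]
    (H' B : V →L[ℂ] V) (hH' : IsSelfAdjoint H') (hB : IsSelfAdjoint B)
    (M : ℝ) (hM : ∀ μ : ℝ, Module.End.HasEigenvalue (↑H' : V →ₗ[ℂ] V) (μ : ℂ) → -M < μ)
    (S : ℝ) (hS : 0 < S)
    (hHad : ∀ s : ℂ, ‖s‖ < S →
      ‖NormedSpace.exp (s • H') * B * NormedSpace.exp (-(s • H'))‖ ≤
        ‖B‖ / (1 - ‖s‖ / S)) :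
    ∀ (s : ℂ), ‖s‖ < S → ∀ (A : V →L[ℂ] V),
      ‖NormedSpace.exp (s • (etrunc H' M + B)) * NormedSpace.exp (-(s • etrunc H' M)) *
          A *
          NormedSpace.exp (s • etrunc H' M) * NormedSpace.exp (-(s • (etrunc H' M + B)))‖ ≤
        Real.exp (2 * ‖s‖ * (2 * ‖B‖ + ‖B‖ / (1 - ‖s‖ / S))) * ‖A‖ := by
  intro s hs A
  rcases subsingleton_or_nontrivial V with hV | hV
  · have h0 : (NormedSpace.exp (s • (etrunc H' M + B)) *
        NormedSpace.exp (-(s • etrunc H' M)) * A * NormedSpace.exp (s • etrunc H' M) *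
        NormedSpace.exp (-(s • (etrunc H' M + B))) : V →L[ℂ] V) = 0 :=
      Subsingleton.elim _ _
    rw [h0, norm_zero]
    positivity
  classical
  have hT : LinearMap.IsSymmetric (H' : V →ₗ[ℂ] V) := hH'.isSymmetric
  set b := hT.eigenvectorBasis rfl with hb
  set μ := hT.eigenvalues (rfl : Module.finrank ℂ V = Module.finrank ℂ V) with hμ
  have hKeq : etrunc H' M = Stmt8Aux.diagOp b fun i => ((min (μ i) M : ℝ) : ℂ) :=
    Stmt8Aux.etrunc_eq_diagOp H' hT rfl M hM
  have hHeq : H' = Stmt8Aux.diagOp b fun i => ((μ i : ℝ) : ℂ) :=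
    Stmt8Aux.self_eq_diagOp H' hT rfl
  set K := etrunc H' M with hK
  have hconj : ∀ w : ℂ, ‖w‖ < S →
      ‖exp (w • K) * B * exp (-(w • K))‖ ≤
        2 * ‖B‖ + ‖B‖ / (1 - ‖w‖ / S) := by
    intro w hw
    rw [hKeq]
    refine Stmt8Aux.conj_bound_gen b B μ (fun i => min (μ i) M) M S hS
      (fun i h => min_eq_left h.le) (fun i h => min_eq_right (not_lt.mp h))
      ?_ w hw
    intro w' hw'
    rw [← hHeq]
    exact hHad w' hw'
  have hSs : 0 < 1 - ‖s‖ / S := by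
    have : ‖s‖ / S < 1 := (div_lt_one hS).mpr hs
    linarith
  set D := 2 * ‖B‖ + ‖B‖ / (1 - ‖s‖ / S) with hD
  set κ := ‖s‖ * D with hκ
  have hseg : ∀ t : ℝ, t ∈ Set.Icc (0:ℝ) 1 →
      ‖exp (((t:ℂ) * s) • K) * B * exp (-(((t:ℂ) * s) • K))‖ ≤ D := by
    intro t ht
    have habs : ‖(t:ℂ) * s‖ = t * ‖s‖ := by
      rw [norm_mul, Complex.norm_real, Real.norm_of_nonneg ht.1]
    have hle : ‖(t:ℂ) * s‖ ≤ ‖s‖ := by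
      rw [habs]
      calc t * ‖s‖ ≤ 1 * ‖s‖ :=
          mul_le_mul_of_nonneg_right ht.2 (norm_nonneg _)
        _ = ‖s‖ := one_mul _
    have hlt : ‖(t:ℂ) * s‖ < S := lt_of_le_of_lt hle hs
    refine (hconj _ hlt).trans ?_
    rw [hD]
    have hmon : ‖B‖ / (1 - ‖(t:ℂ) * s‖ / S) ≤ ‖B‖ / (1 - ‖s‖ / S) := by
      gcongr
    linarith
  have hsm : ∀ t : ℝ, t • (s • K) = ((t:ℂ) * s) • K := by
    intro t
    rw [← smul_assoc, Complex.real_smul]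
  have hb1 : ‖exp (s • (K + B)) * exp (-(s • K))‖ ≤ Real.exp κ := by
    apply Stmt8Aux.gronwall_A
    intro t ht
    have e1 : -(t • (-(s • K))) = ((t:ℂ) * s) • K := by rw [smul_neg, neg_neg, hsm t]
    have e2 : t • (-(s • K)) = -(((t:ℂ) * s) • K) := by rw [smul_neg, hsm t]
    rw [e1, e2]
    have e3 : s • (K + B) + -(s • K) = s • B := by
      rw [smul_add]
      abel
    rw [e3]
    have e4 : exp (((t:ℂ)*s) • K) * (s • B) * exp (-(((t:ℂ)*s) • K)) =
        s • (exp (((t:ℂ)*s) • K) * B * exp (-(((t:ℂ)*s) • K))) := by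
      rw [mul_smul_comm, smul_mul_assoc]
    rw [e4]
    refine le_trans (ContinuousLinearMap.opNorm_smul_le s _) ?_
    rw [hκ]
    exact mul_le_mul_of_nonneg_left (hseg t ht) (norm_nonneg _)
  have hb2 : ‖exp (s • K) * exp (-(s • (K + B)))‖ ≤ Real.exp κ := by
    apply Stmt8Aux.gronwall_B
    intro t ht
    rw [hsm t]
    have e3 : s • K + -(s • (K + B)) = -(s • B) := by
      rw [smul_add]
      abel
    rw [e3]
    have e4 : exp (((t:ℂ)*s) • K) * (-(s • B)) * exp (-(((t:ℂ)*s) • K)) =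
        -(s • (exp (((t:ℂ)*s) • K) * B * exp (-(((t:ℂ)*s) • K)))) := by
      rw [mul_neg, neg_mul, mul_smul_comm, smul_mul_assoc]
    rw [e4, norm_neg]
    refine le_trans (ContinuousLinearMap.opNorm_smul_le s _) ?_
    rw [hκ]
    exact mul_le_mul_of_nonneg_left (hseg t ht) (norm_nonneg _)
  have hfin : exp (s • (K + B)) * exp (-(s • K)) * A * exp (s • K) *
      exp (-(s • (K + B))) =
      (exp (s • (K + B)) * exp (-(s • K))) * A *
        (exp (s • K) * exp (-(s • (K + B)))) := by
    simp only [mul_assoc]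
  rw [hfin]
  refine le_trans (Stmt8Aux.norm_mul3_le _ _ _) ?_
  have step : ‖exp (s • (K + B)) * exp (-(s • K))‖ * ‖A‖ *
      ‖exp (s • K) * exp (-(s • (K + B)))‖ ≤ Real.exp κ * ‖A‖ * Real.exp κ := by
    apply mul_le_mul _ hb2 (norm_nonneg _) (by positivity)
    exact mul_le_mul hb1 le_rfl (norm_nonneg _) (Real.exp_pos _).le
  refine step.trans ?_
  have : Real.exp κ * ‖A‖ * Real.exp κ = (Real.exp κ * Real.exp κ) * ‖A‖ := by ring
  rw [this, ← Real.exp_add]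
  have : κ + κ = 2 * ‖s‖ * D := by rw [hκ]; ring
  rw [this]
end

section
/- Let V be a finite-dimensional complex inner product space, let H' and B be self-adjoint linear endomorphisms of V, let M ∈ ℝ be such that every eigenvalue of H' is strictly greater than −M, and let λ > 0. Define H̄' := H'·E^{H'}((−M,M)) + M·E^{H'}([M,∞)) and H̄ := H̄' + B. Assume the complex Hadamard bound: for every s ∈ ℂ with |s| < 2λ, ‖e^{sH'}·B·e^{−sH'}‖ ≤ ‖B‖/(1 − |s|/(2λ)). Then for every linear endomorphism A of V and all M', N' ∈ ℝ: (a) ‖E^{H̄}([M',∞))·A·E^{H̄}((−∞,N'])‖ ≤ exp(−λ(M' − N' − 8‖B‖))·‖e^{λH̄'}·A·e^{−λH̄'}‖, and (b) ‖E^{H̄'}([M',∞))·A·E^{H̄'}((−∞,N'])‖ ≤ exp(−λ(M' − N' − 8‖B‖))·‖e^{λH̄}·A·e^{−λH̄}‖. -/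
open Set
open scoped Classical


noncomputable instance clmNormedAlgebraRatAux {V : Type*} [NormedAddCommGroup V]
    [InnerProductSpace ℂ V] : NormedAlgebra ℚ (V →L[ℂ] V) :=
  NormedAlgebra.restrictScalars ℚ ℂ (V →L[ℂ] V)

section Aux
variable {V : Type*} [NormedAddCommGroup V] [InnerProductSpace ℂ V] [FiniteDimensional ℂ V]
variable {n : ℕ}

lemma clm_ext_ob (b : OrthonormalBasis (Fin n) ℂ V) {S T : V →L[ℂ] V}
    (h : ∀ i, S (b i) = T (b i)) : S = T := by
  apply ContinuousLinearMap.coe_injective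
  apply b.toBasis.ext
  intro i
  simpa [OrthonormalBasis.coe_toBasis] using h i

lemma diag_norm_le_s9 (b : OrthonormalBasis (Fin n) ℂ V) {T : V →L[ℂ] V} {c : Fin n → ℂ}
    (hT : ∀ i, T (b i) = c i • b i) {C : ℝ} (hC : 0 ≤ C) (hc : ∀ i, ‖c i‖ ≤ C) :
    ‖T‖ ≤ C := by
  refine T.opNorm_le_bound hC fun x => ?_
  have hx : T x = ∑ i, (c i * b.repr x i) • b i := by
    conv_lhs => rw [← b.sum_repr x]
    rw [map_sum]
    refine Finset.sum_congr rfl fun i _ => ?_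
    rw [map_smul, hT i, smul_smul, mul_comm]
  have h1 : T x = b.repr.symm ((WithLp.toLp 2 (fun i => c i * b.repr x i) : EuclideanSpace ℂ (Fin n))) := by
    rw [hx, ← b.sum_repr_symm]
  rw [h1, LinearIsometryEquiv.norm_map]
  have h2 : ‖x‖ = ‖b.repr x‖ := (b.repr.norm_map x).symm
  rw [h2, EuclideanSpace.norm_eq, EuclideanSpace.norm_eq]
  rw [← Real.sqrt_sq hC, ← Real.sqrt_mul (sq_nonneg C)]
  apply Real.sqrt_le_sqrt
  rw [Finset.mul_sum]
  refine Finset.sum_le_sum fun i _ => ?_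
  have : ‖c i * b.repr x i‖ = ‖c i‖ * ‖b.repr x i‖ := norm_mul _ _
  rw [this, mul_pow]
  gcongr
  exact hc i

end Aux


section Aux2
variable {V : Type*} [NormedAddCommGroup V] [InnerProductSpace ℂ V] [FiniteDimensional ℂ V]

lemma exp_apply_eigenvector_s9 {T : V →L[ℂ] V} {v : V} {c : ℂ} (h : T v = c • v) :
    NormedSpace.exp T v = Complex.exp c • v := by
  have hpow : ∀ k : ℕ, (T ^ k) v = c ^ k • v := by
    intro k
    induction k with
    | zero => simp
    | succ k ih =>
      rw [pow_succ, pow_succ, ContinuousLinearMap.mul_apply, h, map_smul, ih, smul_smul,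
        mul_comm]
  have hs : Summable (fun k : ℕ => (Nat.factorial k : ℂ)⁻¹ • T ^ k) := NormedSpace.expSeries_summable' T
  have happ : NormedSpace.exp T v = ∑' k : ℕ, ((Nat.factorial k : ℂ)⁻¹ • T ^ k) v := by
    rw [NormedSpace.exp_eq_tsum ℂ]
    exact ((ContinuousLinearMap.apply ℂ V v).map_tsum hs)
  rw [happ]
  have : ∀ k : ℕ, ((Nat.factorial k : ℂ)⁻¹ • T ^ k) v = ((Nat.factorial k : ℂ)⁻¹ * c ^ k) • v := by
    intro k
    rw [ContinuousLinearMap.smul_apply, hpow, smul_smul]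
  rw [tsum_congr this]
  have hsc : Summable (fun k : ℕ => (Nat.factorial k : ℂ)⁻¹ * c ^ k) := by
    simpa [smul_eq_mul] using NormedSpace.expSeries_summable' (𝕂 := ℂ) c
  rw [Summable.tsum_smul_const]
  · congr 1
    rw [Complex.exp_eq_exp_ℂ, NormedSpace.exp_eq_tsum ℂ]
    simp [smul_eq_mul]
  · exact hsc

lemma specProj_apply_eq {T : V →L[ℂ] V} (hT : IsSelfAdjoint T) (I : Set ℝ)
    {v : V} {μ : ℝ} (hv : T v = (μ : ℂ) • v) :
    specProj T I v = if μ ∈ I then v else 0 := by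
  classical
  have hsym : (↑T : V →ₗ[ℂ] V).IsSymmetric :=
    ContinuousLinearMap.isSelfAdjoint_iff_isSymmetric.mp hT
  set U := ⨆ ν ∈ I, Module.End.eigenspace (↑T : V →ₗ[ℂ] V) ((ν : ℝ) : ℂ) with hU
  by_cases h : μ ∈ I
  · rw [if_pos h]
    have hvU : v ∈ U := by
      have hmem : v ∈ Module.End.eigenspace (↑T : V →ₗ[ℂ] V) ((μ : ℝ) : ℂ) :=
        Module.End.mem_eigenspace_iff.mpr hv
      exact Submodule.mem_iSup_of_mem μ (Submodule.mem_iSup_of_mem h hmem)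
    show (U.subtypeL.comp (Submodule.orthogonalProjectionOnto U)) v = v
    simp only [ContinuousLinearMap.coe_comp', Function.comp_apply, Submodule.subtypeL_apply]
    exact Submodule.starProjection_eq_self_iff.mpr hvU
  · rw [if_neg h]
    have hvU : v ∈ Uᗮ := by
      rw [Submodule.mem_orthogonal]
      intro u hu
      have hUle : U ≤ (ℂ ∙ v)ᗮ := by
        refine iSup₂_le fun ν hν => ?_
        intro x hx
        rw [Submodule.mem_orthogonal_singleton_iff_inner_right]
        have hx' : T x = ((ν : ℝ) : ℂ) • x := Module.End.mem_eigenspace_iff.mp hx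
        have h1 : (inner ℂ v (T x) : ℂ) = (ν : ℂ) * inner ℂ v x := by
          rw [hx', inner_smul_right]
        have h2 : (inner ℂ v (T x) : ℂ) = (μ : ℂ) * inner ℂ v x := by
          have hsvx := hsym v x
          simp only [ContinuousLinearMap.coe_coe] at hsvx
          rw [← hsvx, hv, inner_smul_left, Complex.conj_ofReal]
        have hνμ : ((ν : ℝ) : ℂ) ≠ ((μ : ℝ) : ℂ) := by
          simp only [ne_eq, Complex.ofReal_inj]
          rintro rfl
          exact h hν
        have := h1.symm.trans h2
        rcases mul_eq_mul_right_iff.mp this with h' | h'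
        · exact absurd h' hνμ
        · exact h'
      have := hUle hu
      rw [Submodule.mem_orthogonal_singleton_iff_inner_right] at this
      rw [inner_eq_zero_symm] at this
      exact this
    show (U.subtypeL.comp (Submodule.orthogonalProjectionOnto U)) v = 0
    simp only [ContinuousLinearMap.coe_comp', Function.comp_apply, Submodule.subtypeL_apply]
    rw [Submodule.orthogonalProjectionOnto_apply_of_mem_orthogonal hvU]
    rfl

end Aux2

section Aux3
variable {V : Type*} [NormedAddCommGroup V] [InnerProductSpace ℂ V] [FiniteDimensional ℂ V]

lemma exp_mul_exp_neg_self (Z : V →L[ℂ] V) :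
    NormedSpace.exp Z * NormedSpace.exp (-Z) = 1 := by
  rw [← NormedSpace.exp_add_of_commute (Commute.refl Z).neg_right]
  simp [NormedSpace.exp_zero]

lemma exp_neg_mul_exp_self (Z : V →L[ℂ] V) :
    NormedSpace.exp (-Z) * NormedSpace.exp Z = 1 := by
  rw [← NormedSpace.exp_add_of_commute (Commute.refl Z).neg_left]
  simp [NormedSpace.exp_zero]

lemma spec_offdiag {K : V →L[ℂ] V} (hK : IsSelfAdjoint K) (A : V →L[ℂ] V)
    {lam M' N' : ℝ} (hlam : 0 ≤ lam) :
    ‖specProj K (Set.Ici M') * A * specProj K (Set.Iic N')‖ ≤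
      Real.exp (-(lam * (M' - N'))) *
        ‖NormedSpace.exp ((lam : ℂ) • K) * A * NormedSpace.exp (-((lam : ℂ) • K))‖ := by
  have hsym : (↑K : V →ₗ[ℂ] V).IsSymmetric :=
    ContinuousLinearMap.isSelfAdjoint_iff_isSymmetric.mp hK
  set b := hsym.eigenvectorBasis rfl with hbdef
  set μ := hsym.eigenvalues rfl with hμdef
  have hb : ∀ i, K (b i) = ((μ i : ℝ) : ℂ) • b i := by
    intro i
    exact_mod_cast hsym.apply_eigenvectorBasis rfl i
  set Ep := NormedSpace.exp ((lam : ℂ) • K) with hEp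
  set Em := NormedSpace.exp (-((lam : ℂ) • K)) with hEm
  have hEmEp : ∀ Z : V →L[ℂ] V, Em * (Ep * Z) = Z := by
    intro Z
    rw [← mul_assoc, hEm, hEp, exp_neg_mul_exp_self, one_mul]
  set P := specProj K (Set.Ici M')
  set Q := specProj K (Set.Iic N')
  have hsplit : P * A * Q = (P * Em) * (Ep * A * Em) * (Ep * Q) := by
    simp only [mul_assoc, hEmEp]
  have hEp_b : ∀ i, Ep (b i) = Complex.exp ((lam * μ i : ℝ) : ℂ) • b i := by
    intro i
    rw [hEp]
    apply exp_apply_eigenvector_s9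
    rw [ContinuousLinearMap.smul_apply, hb i, smul_smul]
    push_cast
    ring_nf
  have hEm_b : ∀ i, Em (b i) = Complex.exp ((-(lam * μ i) : ℝ) : ℂ) • b i := by
    intro i
    rw [hEm]
    apply exp_apply_eigenvector_s9
    rw [ContinuousLinearMap.neg_apply, ContinuousLinearMap.smul_apply, hb i, smul_smul,
      ← neg_smul]
    push_cast
    ring_nf
  have hPEm : ‖P * Em‖ ≤ Real.exp (-(lam * M')) := by
    apply diag_norm_le_s9 b (c := fun i =>
        if M' ≤ μ i then Complex.exp ((-(lam * μ i) : ℝ) : ℂ) else 0)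
    · intro i
      rw [ContinuousLinearMap.mul_apply, hEm_b i, map_smul,
        specProj_apply_eq hK _ (hb i)]
      simp only [Set.mem_Ici]
      by_cases h : M' ≤ μ i <;> simp [h]
    · exact Real.exp_nonneg _
    · intro i
      by_cases h : M' ≤ μ i
      · simp only [if_pos h]
        rw [Complex.norm_exp]
        simp only [Complex.ofReal_re]
        apply Real.exp_le_exp.mpr
        simp only [neg_le_neg_iff]
        exact mul_le_mul_of_nonneg_left h hlam
      · simp [h, Real.exp_nonneg]
  have hEpQ : ‖Ep * Q‖ ≤ Real.exp (lam * N') := by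
    apply diag_norm_le_s9 b (c := fun i =>
        if μ i ≤ N' then Complex.exp ((lam * μ i : ℝ) : ℂ) else 0)
    · intro i
      rw [ContinuousLinearMap.mul_apply, specProj_apply_eq hK _ (hb i)]
      simp only [Set.mem_Iic]
      by_cases h : μ i ≤ N' <;> simp [h, hEp_b i]
    · exact Real.exp_nonneg _
    · intro i
      by_cases h : μ i ≤ N'
      · simp only [if_pos h]
        rw [Complex.norm_exp]
        simp only [Complex.ofReal_re]
        exact Real.exp_le_exp.mpr (mul_le_mul_of_nonneg_left h hlam)
      · simp [h, Real.exp_nonneg]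
  calc ‖P * A * Q‖ = ‖(P * Em) * (Ep * A * Em) * (Ep * Q)‖ := by rw [hsplit]
    _ ≤ ‖(P * Em) * (Ep * A * Em)‖ * ‖Ep * Q‖ := norm_mul_le _ _
    _ ≤ ‖P * Em‖ * ‖Ep * A * Em‖ * ‖Ep * Q‖ := by
        gcongr
        exact norm_mul_le _ _
    _ ≤ Real.exp (-(lam * M')) * ‖Ep * A * Em‖ * Real.exp (lam * N') := by
        gcongr
    _ = Real.exp (-(lam * (M' - N'))) * ‖Ep * A * Em‖ := by
        rw [mul_comm _ (Real.exp (lam * N')), ← mul_assoc, ← Real.exp_add]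
        ring_nf
end Aux3

set_option maxHeartbeats 1000000
set_option synthInstance.maxHeartbeats 400000
section Aux4
variable {V : Type*} [NormedAddCommGroup V] [InnerProductSpace ℂ V] [FiniteDimensional ℂ V]

lemma coe_smul_clm (s : ℝ) (Z : V →L[ℂ] V) : (s : ℂ) • Z = s • Z := by
  rw [← algebraMap_smul ℂ s Z]; norm_num

lemma expR_eq_expC : (NormedSpace.exp : (V →L[ℂ] V) → _) = NormedSpace.exp :=
  rfl

lemma norm_one_clm_le : ‖(1 : V →L[ℂ] V)‖ ≤ 1 := by
  rw [ContinuousLinearMap.one_def]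
  exact ContinuousLinearMap.norm_id_le

lemma duhamel_norm_le (X B : V →L[ℂ] V) {lam C : ℝ} (hlam : 0 ≤ lam) (hC : 0 ≤ C)
    (hf : ∀ s : ℝ, s ∈ Set.Icc 0 lam →
      ‖NormedSpace.exp ((s : ℂ) • X) * B * NormedSpace.exp (-((s : ℂ) • X))‖ ≤ C) :
    ‖NormedSpace.exp ((lam : ℂ) • (X + B)) * NormedSpace.exp (-((lam : ℂ) • X))‖ ≤
      Real.exp (C * lam) ∧
    ‖NormedSpace.exp ((lam : ℂ) • X) * NormedSpace.exp (-((lam : ℂ) • (X + B)))‖ ≤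
      Real.exp (C * lam) := by
  set Y := X + B with hY
  set F : ℝ → (V →L[ℂ] V) := fun t =>
    NormedSpace.exp (t • X) * B * NormedSpace.exp (t • (-X)) with hF
  have hcast : ∀ (t : ℝ) (Z : V →L[ℂ] V), -((t : ℂ) • Z) = t • (-Z) := by
    intro t Z
    rw [coe_smul_clm, smul_neg]
  have hFnorm : ∀ t ∈ Set.Icc (0:ℝ) lam, ‖F t‖ ≤ C := by
    intro t ht
    have := hf t ht
    rw [hcast, coe_smul_clm, ← expR_eq_expC] at this
    exact this
  have cancel1 : ∀ t : ℝ, NormedSpace.exp (t • (-X)) * NormedSpace.exp (t • X) = 1 := by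
    intro t
    rw [expR_eq_expC, smul_neg, exp_neg_mul_exp_self]
  have cancel1Y : ∀ t : ℝ, NormedSpace.exp (t • (-Y)) * NormedSpace.exp (t • Y) = 1 := by
    intro t
    rw [expR_eq_expC, smul_neg, exp_neg_mul_exp_self]
  have hXcomm : ∀ t : ℝ, NormedSpace.exp (t • (-X)) * X = X * NormedSpace.exp (t • (-X)) :=
    fun t => (((Commute.refl X).neg_right.smul_right t).exp_right).eq.symm
  have hYcomm : ∀ t : ℝ, NormedSpace.exp (t • (-Y)) * Y = Y * NormedSpace.exp (t • (-Y)) :=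
    fun t => (((Commute.refl Y).neg_right.smul_right t).exp_right).eq.symm
  constructor
  · set g : ℝ → (V →L[ℂ] V) := fun t =>
      NormedSpace.exp (t • Y) * NormedSpace.exp (t • (-X)) with hg
    have hderiv : ∀ t : ℝ, HasDerivAt g (g t * F t) t := by
      intro t
      have h := (hasDerivAt_exp_smul_const Y t).mul (hasDerivAt_exp_smul_const (-X) t)
      have e1 : NormedSpace.exp (t • Y) * Y * NormedSpace.exp (t • (-X)) +
          NormedSpace.exp (t • Y) * (NormedSpace.exp (t • (-X)) * (-X)) =
          NormedSpace.exp (t • Y) * B * NormedSpace.exp (t • (-X)) := by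
        have hc : NormedSpace.exp (t • (-X)) * (-X) = -(X * NormedSpace.exp (t • (-X))) := by
          rw [mul_neg, hXcomm t]
        rw [hc, hY]
        noncomm_ring
      have e2 : g t * F t = NormedSpace.exp (t • Y) * B * NormedSpace.exp (t • (-X)) := by
        rw [hg, hF]
        simp only [mul_assoc]
        rw [← mul_assoc (NormedSpace.exp (t • (-X))) (NormedSpace.exp (t • X)), cancel1,
          one_mul]
      rw [← e1] at e2
      rw [e2]
      exact h
    have hcont : ContinuousOn g (Set.Icc 0 lam) :=
      (continuous_iff_continuousAt.mpr fun t => (hderiv t).continuousAt).continuousOn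
    have hbound : ∀ t ∈ Set.Ico (0:ℝ) lam, ‖g t * F t‖ ≤ C * ‖g t‖ + 0 := by
      intro t ht
      rw [add_zero]
      calc ‖g t * F t‖ ≤ ‖g t‖ * ‖F t‖ := norm_mul_le _ _
        _ ≤ ‖g t‖ * C := mul_le_mul_of_nonneg_left (hFnorm t ⟨ht.1, ht.2.le⟩) (norm_nonneg _)
        _ = C * ‖g t‖ := mul_comm _ _
    have hg0 : ‖g 0‖ ≤ 1 := by
      rw [hg]
      simp only [zero_smul, NormedSpace.exp_zero, one_mul]
      exact norm_one_clm_le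
    have hgron := norm_le_gronwallBound_of_norm_deriv_right_le hcont
      (fun t _ => (hderiv t).hasDerivWithinAt) hg0 hbound lam ⟨hlam, le_refl lam⟩
    rw [gronwallBound_ε0] at hgron
    have hfin : g lam = NormedSpace.exp ((lam : ℂ) • Y) *
        NormedSpace.exp (-((lam : ℂ) • X)) := by
      rw [hg, hcast, coe_smul_clm, ← expR_eq_expC]
    rw [hfin] at hgron
    simpa using hgron
  · set g : ℝ → (V →L[ℂ] V) := fun t =>
      NormedSpace.exp (t • X) * NormedSpace.exp (t • (-Y)) with hg
    have hderiv : ∀ t : ℝ, HasDerivAt g (-(F t * g t)) t := by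
      intro t
      have h := (hasDerivAt_exp_smul_const X t).mul (hasDerivAt_exp_smul_const (-Y) t)
      have e1 : NormedSpace.exp (t • X) * X * NormedSpace.exp (t • (-Y)) +
          NormedSpace.exp (t • X) * (NormedSpace.exp (t • (-Y)) * (-Y)) =
          -(NormedSpace.exp (t • X) * B * NormedSpace.exp (t • (-Y))) := by
        have hc : NormedSpace.exp (t • (-Y)) * (-Y) = -(Y * NormedSpace.exp (t • (-Y))) := by
          rw [mul_neg, hYcomm t]
        rw [hc, hY]
        noncomm_ring
      have e2 : -(F t * g t) =
          -(NormedSpace.exp (t • X) * B * NormedSpace.exp (t • (-Y))) := by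
        rw [hg, hF]
        simp only [mul_assoc]
        rw [← mul_assoc (NormedSpace.exp (t • (-X))) (NormedSpace.exp (t • X)), cancel1,
          one_mul]
      rw [← e1] at e2
      rw [e2]
      exact h
    have hcont : ContinuousOn g (Set.Icc 0 lam) :=
      (continuous_iff_continuousAt.mpr fun t => (hderiv t).continuousAt).continuousOn
    have hbound : ∀ t ∈ Set.Ico (0:ℝ) lam, ‖-(F t * g t)‖ ≤ C * ‖g t‖ + 0 := by
      intro t ht
      rw [add_zero, norm_neg]
      calc ‖F t * g t‖ ≤ ‖F t‖ * ‖g t‖ := norm_mul_le _ _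
        _ ≤ C * ‖g t‖ := mul_le_mul_of_nonneg_right (hFnorm t ⟨ht.1, ht.2.le⟩) (norm_nonneg _)
    have hg0 : ‖g 0‖ ≤ 1 := by
      rw [hg]
      simp only [zero_smul, NormedSpace.exp_zero, one_mul]
      exact norm_one_clm_le
    have hgron := norm_le_gronwallBound_of_norm_deriv_right_le hcont
      (fun t _ => (hderiv t).hasDerivWithinAt) hg0 hbound lam ⟨hlam, le_refl lam⟩
    rw [gronwallBound_ε0] at hgron
    have hfin : g lam = NormedSpace.exp ((lam : ℂ) • X) *
        NormedSpace.exp (-((lam : ℂ) • Y)) := by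
      rw [hg, hcast, coe_smul_clm, ← expR_eq_expC]
    rw [hfin] at hgron
    simpa using hgron

end Aux4

/-- Off-diagonal estimates for the truncated Hamiltonians `H̄' := etrunc H' M`,
`H̄ := H̄' + B`, under the complex Hadamard bound with radius `2λ`. -/
theorem stmt_9 {V : Type*} [NormedAddCommGroup V] [InnerProductSpace ℂ V]
    [FiniteDimensional ℂ V]
    (H' B : V →L[ℂ] V) (hH' : IsSelfAdjoint H') (hB : IsSelfAdjoint B)
    (M : ℝ) (hM : ∀ μ : ℝ, Module.End.HasEigenvalue (↑H' : V →ₗ[ℂ] V) (μ : ℂ) → -M < μ)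
    (lam : ℝ) (hlam : 0 < lam)
    (hHad : ∀ s : ℂ, ‖s‖ < 2 * lam →
      ‖NormedSpace.exp (s • H') * B * NormedSpace.exp (-(s • H'))‖ ≤
        ‖B‖ / (1 - ‖s‖ / (2 * lam))) :
    ∀ (A : V →L[ℂ] V) (M' N' : ℝ),
      ‖specProj (etrunc H' M + B) (Set.Ici M') * A *
          specProj (etrunc H' M + B) (Set.Iic N')‖ ≤
        Real.exp (-lam * (M' - N' - 8 * ‖B‖)) *
          ‖NormedSpace.exp ((lam : ℂ) • etrunc H' M) * A *
              NormedSpace.exp (-((lam : ℂ) • etrunc H' M))‖ ∧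
      ‖specProj (etrunc H' M) (Set.Ici M') * A *
          specProj (etrunc H' M) (Set.Iic N')‖ ≤
        Real.exp (-lam * (M' - N' - 8 * ‖B‖)) *
          ‖NormedSpace.exp ((lam : ℂ) • (etrunc H' M + B)) * A *
              NormedSpace.exp (-((lam : ℂ) • (etrunc H' M + B)))‖ := by
  intro A M' N'
  have hsym : (↑H' : V →ₗ[ℂ] V).IsSymmetric :=
    ContinuousLinearMap.isSelfAdjoint_iff_isSymmetric.mp hH'
  set b := hsym.eigenvectorBasis rfl with hbdef
  set μ := hsym.eigenvalues rfl with hμdef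
  have hb : ∀ i, H' (b i) = ((μ i : ℝ) : ℂ) • b i := fun i => by
    exact_mod_cast hsym.apply_eigenvectorBasis rfl i
  have hμM : ∀ i, -M < μ i := fun i => hM (μ i) (hsym.hasEigenvalue_eigenvalues rfl i)
  set X := etrunc H' M with hX
  set P1 := specProj H' (Set.Ioo (-M) M) with hP1def
  set P2 := specProj H' (Set.Ici M) with hP2def
  set ν : Fin (Module.finrank ℂ V) → ℝ := fun i => min (μ i) M with hν
  have hν_le_μ : ∀ i, ν i ≤ μ i := fun i => min_le_left _ _
  have hν_le_M : ∀ i, ν i ≤ M := fun i => min_le_right _ _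
  have hP1b : ∀ i, P1 (b i) = if μ i ∈ Set.Ioo (-M) M then b i else 0 := by
    intro i
    have := specProj_apply_eq hH' (Set.Ioo (-M) M) (hb i)
    convert this using 2
  have hP2b : ∀ i, P2 (b i) = if μ i ∈ Set.Ici M then b i else 0 := by
    intro i
    have := specProj_apply_eq hH' (Set.Ici M) (hb i)
    convert this using 2
  have hXb : ∀ i, X (b i) = ((ν i : ℝ) : ℂ) • b i := by
    intro i
    show (H' * P1 + (M : ℂ) • P2) (b i) = _
    rw [ContinuousLinearMap.add_apply, ContinuousLinearMap.mul_apply,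
      ContinuousLinearMap.smul_apply, hP1b i, hP2b i]
    rcases lt_or_ge (μ i) M with h | h
    · rw [if_pos (Set.mem_Ioo.mpr ⟨hμM i, h⟩), if_neg (fun hc => absurd (Set.mem_Ici.mp hc)
        (not_le.mpr h)), hb i]
      simp only [smul_zero, add_zero, hν]
      rw [min_eq_left h.le]
    · rw [if_neg (fun hc => absurd (Set.mem_Ioo.mp hc).2 (not_lt.mpr h)),
        if_pos (Set.mem_Ici.mpr h)]
      simp only [map_zero, zero_add, hν]
      rw [min_eq_right h]
  have hnegsmul : ∀ (s : ℝ) (Z : V →L[ℂ] V), -((s : ℂ) • Z) = (((-s : ℝ)) : ℂ) • Z := by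
    intro s Z
    push_cast
    rw [neg_smul]
  have hexpH : ∀ (s : ℝ) (i : _), NormedSpace.exp ((s : ℂ) • H') (b i) =
      Complex.exp (((s * μ i : ℝ)) : ℂ) • b i := by
    intro s i
    apply exp_apply_eigenvector_s9
    rw [ContinuousLinearMap.smul_apply, hb i, smul_smul]
    norm_cast
  have hexpX : ∀ (s : ℝ) (i : _), NormedSpace.exp ((s : ℂ) • X) (b i) =
      Complex.exp (((s * ν i : ℝ)) : ℂ) • b i := by
    intro s i
    apply exp_apply_eigenvector_s9
    rw [ContinuousLinearMap.smul_apply, hXb i, smul_smul]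
    norm_cast
  -- self-adjointness of the truncation
  have hP1sa : IsSelfAdjoint P1 := isSelfAdjoint_starProjection _
  have hP2sa : IsSelfAdjoint P2 := isSelfAdjoint_starProjection _
  have hcomm : P1 * H' = H' * P1 := by
    apply clm_ext_ob b
    intro i
    rw [ContinuousLinearMap.mul_apply, ContinuousLinearMap.mul_apply, hb i, map_smul, hP1b i]
    by_cases h : μ i ∈ Set.Ioo (-M) M
    · simp [h, hb i]
    · simp [h]
  have hXsa : IsSelfAdjoint X := by
    show IsSelfAdjoint (H' * P1 + (M : ℂ) • P2)
    have h1 : IsSelfAdjoint (H' * P1) := by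
      show star (H' * P1) = H' * P1
      rw [star_mul, hP1sa.star_eq, hH'.star_eq, hcomm]
    have h2 : IsSelfAdjoint ((M : ℂ) • P2) := by
      show star ((M : ℂ) • P2) = (M : ℂ) • P2
      rw [star_smul, hP2sa.star_eq, Complex.star_def, Complex.conj_ofReal]
    exact h1.add h2
  have hYsa : IsSelfAdjoint (X + B) := hXsa.add hB
  -- Hadamard bound at real s
  have hHadR : ∀ s : ℝ, s ∈ Set.Icc 0 lam →
      ‖NormedSpace.exp ((s : ℂ) • H') * B * NormedSpace.exp (-((s : ℂ) • H'))‖ ≤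
        2 * ‖B‖ := by
    intro s hs
    have habs : ‖(s : ℂ)‖ = s := by
      rw [Complex.norm_real, Real.norm_of_nonneg hs.1]
    have h1 : ‖(s : ℂ)‖ < 2 * lam := by rw [habs]; linarith [hs.2]
    refine (hHad (s : ℂ) h1).trans ?_
    rw [habs]
    have hsd : s / (2 * lam) ≤ 1 / 2 := by
      rw [div_le_iff₀ (by linarith : (0:ℝ) < 2 * lam)]
      linarith [hs.2]
    have hpos : (0:ℝ) < 1 - s / (2 * lam) := by linarith
    rw [div_le_iff₀ hpos]
    nlinarith [norm_nonneg B]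
  -- diagonal norm bounds
  have hnorm_P1 : ‖P1‖ ≤ 1 := by
    apply diag_norm_le_s9 b (c := fun i => if μ i ∈ Set.Ioo (-M) M then 1 else 0)
    · intro i
      rw [hP1b i]
      by_cases h : μ i ∈ Set.Ioo (-M) M <;> simp [h]
    · norm_num
    · intro i
      by_cases h : μ i ∈ Set.Ioo (-M) M <;> simp [h]
  have hnorm_P2 : ‖P2‖ ≤ 1 := by
    apply diag_norm_le_s9 b (c := fun i => if μ i ∈ Set.Ici M then 1 else 0)
    · intro i
      rw [hP2b i]
      by_cases h : μ i ∈ Set.Ici M <;> simp [h]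
    · norm_num
    · intro i
      by_cases h : μ i ∈ Set.Ici M <;> simp [h]
  have hnorm_EXH : ∀ s : ℝ, s ∈ Set.Icc 0 lam →
      ‖NormedSpace.exp ((s : ℂ) • X) * NormedSpace.exp (-((s : ℂ) • H'))‖ ≤ 1 := by
    intro s hs
    apply diag_norm_le_s9 b (c := fun i => Complex.exp (((s * ν i - s * μ i : ℝ)) : ℂ))
    · intro i
      rw [ContinuousLinearMap.mul_apply, hnegsmul, hexpH, map_smul, hexpX, smul_smul,
        ← Complex.exp_add]
      congr 2
      push_cast
      ring
    · norm_num
    · intro i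
      rw [Complex.norm_exp]
      simp only [Complex.ofReal_re]
      rw [show (1:ℝ) = Real.exp 0 by rw [Real.exp_zero]]
      apply Real.exp_le_exp.mpr
      have := mul_le_mul_of_nonneg_left (hν_le_μ i) hs.1
      linarith
  have hnorm_EX : ∀ s : ℝ, s ∈ Set.Icc 0 lam →
      ‖NormedSpace.exp ((s : ℂ) • X)‖ ≤ Real.exp (s * M) := by
    intro s hs
    apply diag_norm_le_s9 b (c := fun i => Complex.exp (((s * ν i : ℝ)) : ℂ))
    · exact hexpX s
    · exact Real.exp_nonneg _
    · intro i
      rw [Complex.norm_exp]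
      simp only [Complex.ofReal_re]
      exact Real.exp_le_exp.mpr (mul_le_mul_of_nonneg_left (hν_le_M i) hs.1)
  -- the decomposition of the conjugated perturbation
  have hcanH : ∀ (s : ℝ) (Z : V →L[ℂ] V),
      NormedSpace.exp (-((s : ℂ) • H')) * (NormedSpace.exp ((s : ℂ) • H') * Z) = Z := by
    intro s Z
    rw [← mul_assoc, exp_neg_mul_exp_self, one_mul]
  have hf : ∀ s : ℝ, s ∈ Set.Icc 0 lam →
      ‖NormedSpace.exp ((s : ℂ) • X) * B * NormedSpace.exp (-((s : ℂ) • X))‖ ≤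
        3 * ‖B‖ := by
    intro s hs
    set EX := NormedSpace.exp ((s : ℂ) • X) with hEX
    set EXm := NormedSpace.exp (-((s : ℂ) • X)) with hEXm
    set EH := NormedSpace.exp ((s : ℂ) • H') with hEH
    set EHm := NormedSpace.exp (-((s : ℂ) • H')) with hEHm
    have hid : EXm = EHm * P1 + Complex.exp (((-(s * M) : ℝ)) : ℂ) • P2 := by
      apply clm_ext_ob b
      intro i
      rw [hEXm, hEHm, hnegsmul, hexpX, ContinuousLinearMap.add_apply,
        ContinuousLinearMap.mul_apply, ContinuousLinearMap.smul_apply, hP1b i, hP2b i, hnegsmul]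
      rcases lt_or_ge (μ i) M with h | h
      · rw [if_pos (Set.mem_Ioo.mpr ⟨hμM i, h⟩), if_neg (fun hc => absurd (Set.mem_Ici.mp hc)
          (not_le.mpr h)), hexpH, smul_zero, add_zero]
        have hνi : ν i = μ i := min_eq_left h.le
        rw [show (-s * ν i : ℝ) = -s * μ i by rw [hνi]]
      · rw [if_neg (fun hc => absurd (Set.mem_Ioo.mp hc).2 (not_lt.mpr h)),
          if_pos (Set.mem_Ici.mpr h), map_zero, zero_add]
        have hνi : ν i = M := min_eq_right h
        rw [show (-s * ν i : ℝ) = -(s * M) by rw [hνi]; ring]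
    have hdecomp : EX * B * EXm =
        (EX * EHm) * (EH * B * EHm) * P1 +
          Complex.exp (((-(s * M) : ℝ)) : ℂ) • (EX * B * P2) := by
      rw [hid, mul_add, mul_smul_comm]
      congr 1
      simp only [mul_assoc]
      rw [hEH, hEHm, hcanH]
    rw [hdecomp]
    refine (norm_add_le _ _).trans ?_
    have t1 : ‖(EX * EHm) * (EH * B * EHm) * P1‖ ≤ 2 * ‖B‖ := by
      calc ‖(EX * EHm) * (EH * B * EHm) * P1‖
          ≤ ‖(EX * EHm) * (EH * B * EHm)‖ * ‖P1‖ := norm_mul_le _ _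
        _ ≤ ‖EX * EHm‖ * ‖EH * B * EHm‖ * ‖P1‖ := by gcongr; exact norm_mul_le _ _
        _ ≤ 1 * (2 * ‖B‖) * 1 := by
            gcongr <;> first
              | exact hnorm_EXH s hs
              | exact hHadR s hs
              | exact hnorm_P1
        _ = 2 * ‖B‖ := by ring
    have t2 : ‖Complex.exp (((-(s * M) : ℝ)) : ℂ) • (EX * B * P2)‖ ≤ ‖B‖ := by
      rw [norm_smul (Complex.exp (((-(s * M) : ℝ)) : ℂ)) (EX * B * P2),
        Complex.norm_exp]
      simp only [Complex.ofReal_re]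
      calc Real.exp (-(s * M)) * ‖EX * B * P2‖
          ≤ Real.exp (-(s * M)) * (Real.exp (s * M) * ‖B‖ * 1) := by
            gcongr
            calc ‖EX * B * P2‖ ≤ ‖EX * B‖ * ‖P2‖ := norm_mul_le _ _
              _ ≤ ‖EX‖ * ‖B‖ * ‖P2‖ := by gcongr; exact norm_mul_le _ _
              _ ≤ Real.exp (s * M) * ‖B‖ * 1 := by
                  gcongr <;> first
                    | exact hnorm_EX s hs
                    | exact hnorm_P2
        _ = ‖B‖ := by
            rw [mul_one, ← mul_assoc, ← Real.exp_add]
            simp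
    linarith
  -- Duhamel bounds
  have hD := duhamel_norm_le X B hlam.le (by positivity) hf
  set T1 := ‖NormedSpace.exp ((lam : ℂ) • X) * A * NormedSpace.exp (-((lam : ℂ) • X))‖
    with hT1
  set T2 := ‖NormedSpace.exp ((lam : ℂ) • (X + B)) * A *
      NormedSpace.exp (-((lam : ℂ) • (X + B)))‖ with hT2
  have hT1nn : 0 ≤ T1 := by rw [hT1]; exact norm_nonneg _
  have hT2nn : 0 ≤ T2 := by rw [hT2]; exact norm_nonneg _
  have hcanX : ∀ Z : V →L[ℂ] V,
      NormedSpace.exp (-((lam : ℂ) • X)) * (NormedSpace.exp ((lam : ℂ) • X) * Z) = Z := by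
    intro Z
    rw [← mul_assoc, exp_neg_mul_exp_self, one_mul]
  have hcanY : ∀ Z : V →L[ℂ] V,
      NormedSpace.exp (-((lam : ℂ) • (X + B))) *
        (NormedSpace.exp ((lam : ℂ) • (X + B)) * Z) = Z := by
    intro Z
    rw [← mul_assoc, exp_neg_mul_exp_self, one_mul]
  constructor
  · -- part (a)
    have h1 := spec_offdiag hYsa A hlam.le (M' := M') (N' := N')
    have hmid : NormedSpace.exp ((lam : ℂ) • (X + B)) * A *
        NormedSpace.exp (-((lam : ℂ) • (X + B))) =
        (NormedSpace.exp ((lam : ℂ) • (X + B)) * NormedSpace.exp (-((lam : ℂ) • X))) *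
          (NormedSpace.exp ((lam : ℂ) • X) * A * NormedSpace.exp (-((lam : ℂ) • X))) *
          (NormedSpace.exp ((lam : ℂ) • X) * NormedSpace.exp (-((lam : ℂ) • (X + B)))) := by
      simp only [mul_assoc]
      rw [hcanX, hcanX]
    have h2 : T2 ≤ Real.exp (3 * ‖B‖ * lam) * T1 * Real.exp (3 * ‖B‖ * lam) := by
      rw [hT2, hmid]
      calc ‖_ * _ * _‖ ≤ ‖_ * _‖ * ‖_‖ := norm_mul_le _ _
        _ ≤ ‖NormedSpace.exp ((lam : ℂ) • (X + B)) * NormedSpace.exp (-((lam : ℂ) • X))‖ *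
            T1 * ‖NormedSpace.exp ((lam : ℂ) • X) *
              NormedSpace.exp (-((lam : ℂ) • (X + B)))‖ := by
            gcongr
            exact norm_mul_le _ _
        _ ≤ Real.exp (3 * ‖B‖ * lam) * T1 * Real.exp (3 * ‖B‖ * lam) := by
            gcongr <;> first
              | exact hT1nn
              | exact hD.1
              | exact hD.2
    calc ‖specProj (X + B) (Set.Ici M') * A * specProj (X + B) (Set.Iic N')‖ ≤
        Real.exp (-(lam * (M' - N'))) * T2 := h1
      _ ≤ Real.exp (-(lam * (M' - N'))) *
          (Real.exp (3 * ‖B‖ * lam) * T1 * Real.exp (3 * ‖B‖ * lam)) := by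
          gcongr
          all_goals first | exact Real.exp_nonneg _ | exact h2
      _ = Real.exp (-(lam * (M' - N')) + 3 * ‖B‖ * lam + 3 * ‖B‖ * lam) * T1 := by
          rw [Real.exp_add, Real.exp_add]
          ring
      _ ≤ Real.exp (-lam * (M' - N' - 8 * ‖B‖)) * T1 := by
          have hexp : Real.exp (-(lam * (M' - N')) + 3 * ‖B‖ * lam + 3 * ‖B‖ * lam) ≤
              Real.exp (-lam * (M' - N' - 8 * ‖B‖)) := by
            apply Real.exp_le_exp.mpr
            nlinarith [norm_nonneg B, hlam.le]
          exact mul_le_mul_of_nonneg_right hexp hT1nn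
  · -- part (b)
    have h1 := spec_offdiag hXsa A hlam.le (M' := M') (N' := N')
    have hmid : NormedSpace.exp ((lam : ℂ) • X) * A *
        NormedSpace.exp (-((lam : ℂ) • X)) =
        (NormedSpace.exp ((lam : ℂ) • X) * NormedSpace.exp (-((lam : ℂ) • (X + B)))) *
          (NormedSpace.exp ((lam : ℂ) • (X + B)) * A *
            NormedSpace.exp (-((lam : ℂ) • (X + B)))) *
          (NormedSpace.exp ((lam : ℂ) • (X + B)) * NormedSpace.exp (-((lam : ℂ) • X))) := by
      simp only [mul_assoc]
      rw [hcanY, hcanY]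
    have h2 : T1 ≤ Real.exp (3 * ‖B‖ * lam) * T2 * Real.exp (3 * ‖B‖ * lam) := by
      rw [hT1, hmid]
      calc ‖_ * _ * _‖ ≤ ‖_ * _‖ * ‖_‖ := norm_mul_le _ _
        _ ≤ ‖NormedSpace.exp ((lam : ℂ) • X) *
              NormedSpace.exp (-((lam : ℂ) • (X + B)))‖ *
            T2 * ‖NormedSpace.exp ((lam : ℂ) • (X + B)) *
              NormedSpace.exp (-((lam : ℂ) • X))‖ := by
            gcongr
            exact norm_mul_le _ _
        _ ≤ Real.exp (3 * ‖B‖ * lam) * T2 * Real.exp (3 * ‖B‖ * lam) := by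
            gcongr <;> first
              | exact hT2nn
              | exact hD.2
              | exact hD.1
    calc ‖specProj X (Set.Ici M') * A * specProj X (Set.Iic N')‖ ≤
        Real.exp (-(lam * (M' - N'))) * T1 := h1
      _ ≤ Real.exp (-(lam * (M' - N'))) *
          (Real.exp (3 * ‖B‖ * lam) * T2 * Real.exp (3 * ‖B‖ * lam)) := by
          gcongr
          all_goals first | exact Real.exp_nonneg _ | exact h2
      _ = Real.exp (-(lam * (M' - N')) + 3 * ‖B‖ * lam + 3 * ‖B‖ * lam) * T2 := by
          rw [Real.exp_add, Real.exp_add]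
          ring
      _ ≤ Real.exp (-lam * (M' - N' - 8 * ‖B‖)) * T2 := by
          have hexp : Real.exp (-(lam * (M' - N')) + 3 * ‖B‖ * lam + 3 * ‖B‖ * lam) ≤
              Real.exp (-lam * (M' - N' - 8 * ‖B‖)) := by
            apply Real.exp_le_exp.mpr
            nlinarith [norm_nonneg B, hlam.le]
          exact mul_le_mul_of_nonneg_right hexp hT2nn
end
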